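/- arXiv:0809.3941 — 2 statements merged into one kernel-verified Lean document; each statement's English description precedes it below -/
import Mathlib

section
/- Let (X,d) be a compact metric space and f : X → X a continuous map with the specification property. Then every f-invariant Borel probability measure μ on X (not necessarily ergodic) has a generic point: there exists x ∈ X such that (1/n) S_nφ(x) → ∫φ dμ as n → ∞ for every continuous φ : X → ℝ; equivalently, the empirical measures δ_{x,n} = (1/n) Σ_{k=0}^{n−1} δ_{f^k(x)} converge to μ in the weak* topology. -/
open MeasureTheory Filter Topology Set
open scoped ENNReal NNReal

section CommonDefs

variable {X : Type*} [MetricSpace X]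

/-- The Bowen dynamical ball `B_n(x, ε)`. -/
def bowenBall (f : X → X) (ε : ℝ) (n : ℕ) (x : X) : Set X :=
  {y | ∀ i < n, dist (f^[i] x) (f^[i] y) < ε}

/-- The specification property. -/
def SpecificationProperty (f : X → X) : Prop :=
  ∀ ε : ℝ, 0 < ε → ∃ m : ℕ, ∀ (k : ℕ) (a b : Fin k → ℕ) (x : Fin k → X),
    (∀ j, a j ≤ b j) →
    (∀ (j : Fin k) (hj : (j : ℕ) + 1 < k), b j + m ≤ a ⟨(j : ℕ) + 1, hj⟩) →
    ∃ y : X, ∀ j : Fin k, ∀ p : ℕ, p ≤ b j - a j →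
      dist (f^[p + a j] y) (f^[p] (x j)) < ε

/-- Bowen's (periodic) specification property. -/
def BowenSpecificationProperty (f : X → X) : Prop :=
  ∀ ε : ℝ, 0 < ε → ∃ m : ℕ, ∀ (k : ℕ) (hk : 0 < k) (a b : Fin k → ℕ) (x : Fin k → X),
    (∀ j, a j ≤ b j) →
    (∀ (j : Fin k) (hj : (j : ℕ) + 1 < k), b j + m ≤ a ⟨(j : ℕ) + 1, hj⟩) →
    ∀ p : ℕ, b ⟨k - 1, Nat.sub_lt hk Nat.one_pos⟩ - a ⟨0, hk⟩ + m ≤ p →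
      ∃ y : X, Function.IsPeriodicPt f p y ∧ Function.minimalPeriod f y = p ∧
        ∀ j : Fin k, ∀ q : ℕ, q ≤ b j - a j →
          dist (f^[q + a j] y) (f^[q] (x j)) < ε

/-- The level set `X(φ, α)` of points whose Birkhoff average of `φ` equals `α`. -/
def levelSet (f : X → X) (φ : X → ℝ) (α : ℝ) : Set X :=
  {x | Tendsto (fun n : ℕ => birkhoffSum f φ n x / n) atTop (𝓝 α)}

/-- The multifractal spectrum `L_φ`. -/
def birkhoffSpectrum (f : X → X) (φ : X → ℝ) : Set ℝ :=
  {α : ℝ | (levelSet f φ α).Nonempty}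

/-- The level set for ratios of Birkhoff sums. -/
def ratioLevelSet (f : X → X) (φ ρ : X → ℝ) (α : ℝ) : Set X :=
  {x | Tendsto (fun n : ℕ => birkhoffSum f φ n x / birkhoffSum f ρ n x) atTop (𝓝 α)}

/-- Supremum of the `n`-th Birkhoff sum of `ψ` over the Bowen ball `B_n(x,ε)`. -/
noncomputable def ballSup (f : X → X) (ψ : X → ℝ) (ε : ℝ) (n : ℕ) (x : X) : ℝ :=
  sSup (birkhoffSum f ψ n '' bowenBall f ε n x)

/-- The quantity `Q(Z, α, Γ, ψ)` associated to a collection `Γ` of Bowen balls,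
recorded as a set of pairs (centre, length). -/
noncomputable def coverSum (f : X → X) (ψ : X → ℝ) (ε α : ℝ) (Γ : Set (X × ℕ)) : ℝ≥0∞ :=
  ∑' p : Γ, ENNReal.ofReal (Real.exp (-α * (p.1.2 : ℝ) + ballSup f ψ ε p.1.2 p.1.1))

/-- `M(Z, α, ε, N, ψ)`: infimum of `Q` over countable collections of Bowen balls of length
at least `N` covering `Z`. -/
noncomputable def pressureM (f : X → X) (ψ : X → ℝ) (Z : Set X) (α ε : ℝ) (N : ℕ) : ℝ≥0∞ :=
  ⨅ (Γ : Set (X × ℕ)) (_ : Γ.Countable) (_ : ∀ p ∈ Γ, N ≤ p.2)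
    (_ : Z ⊆ ⋃ p ∈ Γ, bowenBall f ε p.2 p.1), coverSum f ψ ε α Γ

/-- `m(Z, α, ε, ψ) = lim_{N → ∞} M(Z, α, ε, N, ψ)`; the limit of the nondecreasing
sequence `N ↦ M(Z, α, ε, N, ψ)` is its supremum. -/
noncomputable def pressureOuter (f : X → X) (ψ : X → ℝ) (Z : Set X) (α ε : ℝ) : ℝ≥0∞ :=
  ⨆ N : ℕ, pressureM f ψ Z α ε N

/-- The Pesin–Pitskel topological pressure of `ψ` on `Z` at scale `ε`:
`P_Z(ψ, ε) = inf {α : m(Z, α, ε, ψ) = 0}`. -/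
noncomputable def pressureEps (f : X → X) (ψ : X → ℝ) (Z : Set X) (ε : ℝ) : ℝ :=
  sInf {α : ℝ | pressureOuter f ψ Z α ε = 0}

/-- The Pesin–Pitskel topological pressure of `ψ` on `Z`: the limit of `P_Z(ψ, ε)`
as `ε → 0⁺` (realised as a `limsup` along `𝓝[>] 0`). -/
noncomputable def topPressure (f : X → X) (ψ : X → ℝ) (Z : Set X) : ℝ :=
  limsup (fun ε : ℝ => pressureEps f ψ Z ε) (𝓝[>] 0)

/-- `S` is an `(n, ε)`-spanning subset of `Z`. -/
def IsSpanningSetOf (f : X → X) (Z : Set X) (n : ℕ) (ε : ℝ) (S : Finset X) : Prop :=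
  ↑S ⊆ Z ∧ ∀ z ∈ Z, ∃ x ∈ S, ∀ i < n, dist (f^[i] x) (f^[i] z) ≤ ε

/-- `S` is an `(n, ε)`-separated set. -/
def IsSeparatedSet (f : X → X) (n : ℕ) (ε : ℝ) (S : Finset X) : Prop :=
  ∀ x ∈ S, ∀ y ∈ S, x ≠ y → ∃ i < n, ε < dist (f^[i] x) (f^[i] y)

/-- `Q_n(Z, ψ, ε)`: the infimum of `∑_{x ∈ S} exp(S_n ψ(x))` over `(n,ε)`-spanning
subsets `S` of `Z`. -/
noncomputable def spanningQ (f : X → X) (ψ : X → ℝ) (Z : Set X) (n : ℕ) (ε : ℝ) : ℝ :=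
  sInf {r : ℝ | ∃ S : Finset X, IsSpanningSetOf f Z n ε S ∧
    r = ∑ x ∈ S, Real.exp (birkhoffSum f ψ n x)}

/-- The lower capacity pressure at scale `ε`. -/
noncomputable def lowerCapPressureEps (f : X → X) (ψ : X → ℝ) (Z : Set X) (ε : ℝ) : ℝ :=
  atTop.liminf fun n : ℕ => Real.log (spanningQ f ψ Z n ε) / n

/-- The lower capacity pressure `CP̲_Z(ψ)`. -/
noncomputable def lowerCapPressure (f : X → X) (ψ : X → ℝ) (Z : Set X) : ℝ :=
  limsup (fun ε : ℝ => lowerCapPressureEps f ψ Z ε) (𝓝[>] 0)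

end CommonDefs

section EntropyDefs

variable {X : Type*} [MeasurableSpace X]

/-- Static entropy of a finite collection of sets. -/
noncomputable def partitionEntropy (μ : Measure X) (P : Finset (Set X)) : ℝ :=
  ∑ A ∈ P, Real.negMulLog (μ A).toReal

/-- The join `⋁_{i=0}^{n-1} f^{-i} P` of a finite partition under iterates of `f`. -/
noncomputable def partitionJoin {Y : Type*} (f : Y → Y) (P : Finset (Set Y)) (n : ℕ) :
    Finset (Set Y) :=
  letI := Classical.decEq (Set Y)
  Finset.image
    (fun g : Fin n → {A // A ∈ P} => ⋂ i : Fin n, f^[(i : ℕ)] ⁻¹' ((g i : Set Y)))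
    Finset.univ

/-- The dynamical entropy of `f` with respect to `μ` and a partition `P`. -/
noncomputable def entropyOfPartition (f : X → X) (μ : Measure X) (P : Finset (Set X)) : ℝ :=
  atTop.liminf fun n : ℕ => partitionEntropy μ (partitionJoin f P n) / n

/-- `P` is a finite partition of `X` into measurable sets. -/
def IsMeasPartition (P : Finset (Set X)) : Prop :=
  (∀ A ∈ P, MeasurableSet A) ∧ (⋃ A ∈ P, A) = Set.univ ∧
    (P : Set (Set X)).Pairwise fun A B => Disjoint A B

/-- Measure-theoretic (Kolmogorov–Sinai) entropy `h_μ(f)`: the supremum of dynamical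
entropies over finite measurable partitions. -/
noncomputable def measEntropy (f : X → X) (μ : Measure X) : ℝ :=
  sSup {h : ℝ | ∃ P : Finset (Set X), IsMeasPartition P ∧ h = entropyOfPartition f μ P}

end EntropyDefs


section GenericPointAux

open Function

variable {X : Type*} [MetricSpace X]

lemma continuous_birkhoffSum' (f : X → X) (hf : Continuous f) (φ : X → ℝ) (hφ : Continuous φ)
    (n : ℕ) : Continuous (fun x => birkhoffSum f φ n x) :=
  continuous_finset_sum _ (fun i _ => hφ.comp (hf.iterate i))


lemma sum_range_mul_eq (g : ℕ → ℝ) (q c : ℕ) :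
    ∑ i ∈ Finset.range (q * c), g i = ∑ j ∈ Finset.range q, ∑ p ∈ Finset.range c, g (j * c + p) := by
  induction q with
  | zero => simp
  | succ q ih =>
    rw [Nat.succ_mul, Finset.sum_range_add, ih, Finset.sum_range_succ]


variable [CompactSpace X]

lemma exists_modulus_fin (k : ℕ) (φ : Fin k → C(X, ℝ)) {d : ℝ} (hd : 0 < d) :
    ∃ r : ℝ, 0 < r ∧ ∀ i : Fin k, ∀ u v : X, dist u v ≤ r → |φ i u - φ i v| ≤ d := by
  have h : ∀ i : Fin k, ∃ r : ℝ, 0 < r ∧ ∀ u v : X, dist u v ≤ r → |φ i u - φ i v| ≤ d := by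
    intro i
    have huc : UniformContinuous (φ i) :=
      CompactSpace.uniformContinuous_of_continuous (φ i).continuous
    obtain ⟨r, hr0, hr⟩ := Metric.uniformContinuous_iff.mp huc d hd
    refine ⟨r / 2, by linarith, fun u v huv => ?_⟩
    have := hr (a := u) (b := v) (by linarith [huv] : dist u v < r)
    rw [Real.dist_eq] at this
    exact this.le
  choose r hr0 hr using h
  rcases Nat.eq_zero_or_pos k with hk | hk
  · subst hk; exact ⟨1, one_pos, fun i => absurd i.2 (by omega)⟩
  · have : Nonempty (Fin k) := ⟨⟨0, hk⟩⟩
    refine ⟨Finset.univ.inf' Finset.univ_nonempty r, ?_, ?_⟩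
    · exact (Finset.lt_inf'_iff _).mpr fun i _ => hr0 i
    · intro i u v huv
      exact hr i u v (huv.trans (Finset.inf'_le _ (Finset.mem_univ i)))


variable [MeasurableSpace X] [BorelSpace X]

omit [CompactSpace X] in
lemma integral_comp_iterate {f : X → X} (hf : Continuous f) {μ : Measure X}
    (hinv : MeasurePreserving f μ μ) {φ : X → ℝ} (hφ : Continuous φ) (k : ℕ) :
    ∫ x, φ (f^[k] x) ∂μ = ∫ x, φ x ∂μ := by
  induction k with
  | zero => simp
  | succ k ih =>
    have h2 : ∫ y, (fun y => φ (f^[k] y)) y ∂(Measure.map f μ) = ∫ x, φ (f^[k] (f x)) ∂μ :=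
      MeasureTheory.integral_map hf.aemeasurable
        ((hφ.comp (hf.iterate k)).aestronglyMeasurable)
    rw [hinv.map_eq] at h2
    calc ∫ x, φ (f^[k+1] x) ∂μ = ∫ x, φ (f^[k] (f x)) ∂μ := by
          simp only [Function.iterate_succ_apply]
      _ = ∫ y, φ (f^[k] y) ∂μ := h2.symm
      _ = ∫ x, φ x ∂μ := ih


lemma integral_birkhoffSum {f : X → X} (hf : Continuous f) {μ : Measure X}
    [IsProbabilityMeasure μ] (hinv : MeasurePreserving f μ μ) {φ : X → ℝ} (hφ : Continuous φ)
    (n : ℕ) : ∫ x, birkhoffSum f φ n x ∂μ = n * ∫ x, φ x ∂μ := by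
  have : ∀ i : ℕ, Integrable (fun x => φ (f^[i] x)) μ := fun i =>
    (hφ.comp (hf.iterate i)).integrable_of_hasCompactSupport
      ((isClosed_tsupport _).isCompact)
  unfold birkhoffSum
  rw [integral_finset_sum _ (fun i _ => this i)]
  rw [Finset.sum_congr rfl (fun i _ => integral_comp_iterate hf hinv hφ i)]
  simp [mul_comm]


set_option maxHeartbeats 1000000 in
lemma barycenter {f : X → X} (hf : Continuous f) {μ : Measure X}
    [IsProbabilityMeasure μ] (hinv : MeasurePreserving f μ μ)
    (k : ℕ) (φ : Fin k → C(X, ℝ)) {δ : ℝ} (hδ : 0 < δ) {n : ℕ} (hn : 0 < n) :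
    ∃ q : ℕ, 0 < q ∧ ∃ z : Fin q → X, ∀ i,
      |(∑ t, birkhoffSum f (φ i) n (z t)) - q * n * ∫ x, φ i x ∂μ| ≤ q * n * δ := by
  classical
  set v : X → (Fin k → ℝ) := fun x i => birkhoffSum f (φ i) n x with hv
  have hvc : Continuous v := continuous_pi fun i =>
    continuous_finset_sum _ (fun p _ => (φ i).continuous.comp (hf.iterate p))
  have hvint : Integrable v μ :=
    hvc.integrable_of_hasCompactSupport ((isClosed_tsupport v).isCompact)
  set B : ℝ := (∑ i, ‖φ i‖) + 1 with hB
  have hB0 : 0 < B := by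
    have : (0:ℝ) ≤ ∑ i, ‖φ i‖ := Finset.sum_nonneg fun i _ => norm_nonneg _
    linarith
  have hφB : ∀ (i : Fin k) (u : X), |φ i u| ≤ B := by
    intro i u
    have h1 : ‖φ i u‖ ≤ ‖φ i‖ := ContinuousMap.norm_coe_le_norm _ _
    have h2 : ‖φ i‖ ≤ ∑ j, ‖φ j‖ :=
      Finset.single_le_sum (fun j _ => norm_nonneg (φ j)) (Finset.mem_univ i)
    rw [Real.norm_eq_abs] at h1; linarith
  have hvbound : ∀ (x : X) (i : Fin k), |v x i| ≤ n * B := by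
    intro x i
    calc |v x i| ≤ ∑ p ∈ Finset.range n, |φ i (f^[p] x)| := Finset.abs_sum_le_sum_abs _ _
      _ ≤ ∑ _p ∈ Finset.range n, B := Finset.sum_le_sum fun p _ => hφB i _
      _ = n * B := by simp [mul_comm]
  set s : Set (Fin k → ℝ) := closure (convexHull ℝ (Set.range v)) with hs
  have hI : (∫ x, v x ∂μ) ∈ s :=
    Convex.integral_mem ((convex_convexHull ℝ _).closure) isClosed_closure
      (Eventually.of_forall fun x => subset_closure (subset_convexHull ℝ _ (Set.mem_range_self x)))
      hvint
  have hIi : ∀ i, (∫ x, v x ∂μ) i = n * ∫ x, φ i x ∂μ := by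
    intro i
    have h := (ContinuousLinearMap.proj (R := ℝ) (φ := fun _ : Fin k => ℝ) i).integral_comp_comm
      hvint
    simp only [ContinuousLinearMap.proj_apply] at h
    rw [← h]
    exact integral_birkhoffSum hf hinv (φ i).continuous n
  have hδn4 : 0 < (n : ℝ) * δ / 4 := by positivity
  obtain ⟨w, hw, hwI⟩ := Metric.mem_closure_iff.mp hI _ hδn4
  rw [convexHull_eq] at hw
  obtain ⟨ι, t, ww, vz, hww0, hww1, hvz, hcm⟩ := hw
  have hne : Nonempty X := by
    rcases isEmpty_or_nonempty X with h | h
    · exfalso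
      have h1 : (μ Set.univ) = 1 := measure_univ
      rw [Set.univ_eq_empty_iff.mpr h, measure_empty] at h1
      exact zero_ne_one h1
    · exact h
  have hpts : ∀ ι' ∈ t, ∃ xx : X, v xx = vz ι' := fun ι' h => hvz ι' h
  choose! pts hpts using hpts
  set Q : ℕ := ⌈(8 * t.card * B) / δ⌉₊ + 1 with hQ
  set cnt : ι → ℕ := fun ι' => ⌈ww ι' * Q⌉₊ with hcnt
  set q : ℕ := ∑ ι' ∈ t, cnt ι' with hq
  have hcntup : ∀ ι' ∈ t, (cnt ι' : ℝ) ≤ ww ι' * Q + 1 := fun ι' h =>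
    (Nat.ceil_lt_add_one (mul_nonneg (hww0 ι' h) (Nat.cast_nonneg _))).le
  have hcntlow : ∀ ι' ∈ t, ww ι' * Q ≤ (cnt ι' : ℝ) := fun ι' _ => Nat.le_ceil _
  have hqQ : (Q : ℝ) ≤ q := by
    calc (Q:ℝ) = ∑ ι' ∈ t, ww ι' * Q := by rw [← Finset.sum_mul, hww1, one_mul]
      _ ≤ ∑ ι' ∈ t, (cnt ι' : ℝ) := Finset.sum_le_sum hcntlow
      _ = q := by rw [hq]; push_cast; rfl
  have hqQ' : (q : ℝ) ≤ Q + t.card := by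
    calc (q:ℝ) = ∑ ι' ∈ t, (cnt ι' : ℝ) := by rw [hq]; push_cast; rfl
      _ ≤ ∑ ι' ∈ t, (ww ι' * Q + 1) := Finset.sum_le_sum hcntup
      _ = Q + t.card := by rw [Finset.sum_add_distrib, ← Finset.sum_mul, hww1]; simp
  have hq0 : 0 < q := by
    have hQ0 : 0 < Q := Nat.succ_pos _
    have h1 : (0:ℝ) < (Q:ℝ) := by exact_mod_cast hQ0
    exact_mod_cast h1.trans_le hqQ
  have hcard : Fintype.card ((ι' : t) × Fin (cnt ι'.1)) = q := by
    rw [Fintype.card_sigma]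
    simp only [Fintype.card_fin]
    rw [hq, ← Finset.sum_coe_sort t cnt]
  let e := Fintype.equivFinOfCardEq hcard
  refine ⟨q, hq0, fun j => pts (e.symm j).1, ?_⟩
  intro i
  have hsum : (∑ j : Fin q, birkhoffSum f (φ i) n (pts (e.symm j).1))
      = ∑ ι' ∈ t, (cnt ι' : ℝ) * vz ι' i := by
    rw [Equiv.sum_comp e.symm (fun p => birkhoffSum f (φ i) n (pts p.1))]
    rw [← Finset.univ_sigma_univ, Finset.sum_sigma]
    rw [← Finset.sum_coe_sort t (fun ι'' => (cnt ι'' : ℝ) * vz ι'' i)]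
    refine Finset.sum_congr rfl fun ι' _ => ?_
    calc (∑ _s : Fin (cnt ι'.1), birkhoffSum f (φ i) n (pts ι'.1))
        = (cnt ι'.1 : ℝ) * birkhoffSum f (φ i) n (pts ι'.1) := by
          rw [Finset.sum_const, Finset.card_univ, Fintype.card_fin, nsmul_eq_mul]
      _ = (cnt ι'.1 : ℝ) * vz ι'.1 i := by
          congr 1
          have h2 := hpts ι'.1 ι'.2
          calc birkhoffSum f (φ i) n (pts ι'.1) = v (pts ι'.1) i := rfl
            _ = vz ι'.1 i := by rw [h2]
  -- coordinates of w
  have hwcoord : w i = ∑ ι' ∈ t, ww ι' * vz ι' i := by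
    rw [← hcm, Finset.centerMass, hww1, inv_one, one_smul]
    rw [Finset.sum_apply]
    simp [Pi.smul_apply, smul_eq_mul]
  have hvzB : ∀ ι' ∈ t, |vz ι' i| ≤ n * B := by
    intro ι' h
    rw [← hpts ι' h]
    exact hvbound _ i
  -- |w i - I i| ≤ nδ/4
  have hwIi : |(∫ x, v x ∂μ) i - w i| ≤ (n:ℝ) * δ / 4 := by
    have h := dist_le_pi_dist (∫ x, v x ∂μ) w i
    rw [Real.dist_eq] at h
    exact h.trans hwI.le
  -- count discrepancy
  have hdisc : ∀ ι' ∈ t, |(cnt ι' : ℝ) - q * ww ι'| ≤ 1 + ww ι' * t.card := by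
    intro ι' h
    have h1 := hcntlow ι' h
    have h2 := hcntup ι' h
    have h3 : ww ι' * Q ≤ ww ι' * q := by
      apply mul_le_mul_of_nonneg_left hqQ (hww0 ι' h)
    have h4 : ww ι' * q ≤ ww ι' * Q + ww ι' * t.card := by
      have := mul_le_mul_of_nonneg_left hqQ' (hww0 ι' h)
      nlinarith [hww0 ι' h]
    rw [abs_le]
    constructor <;> nlinarith [hww0 ι' h]
  have hdiscsum : ∑ ι' ∈ t, |(cnt ι' : ℝ) - q * ww ι'| ≤ 2 * t.card := by
    calc ∑ ι' ∈ t, |(cnt ι' : ℝ) - q * ww ι'| ≤ ∑ ι' ∈ t, (1 + ww ι' * t.card) :=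
          Finset.sum_le_sum hdisc
      _ = t.card + 1 * t.card := by
          rw [Finset.sum_add_distrib, Finset.sum_const, ← Finset.sum_mul, hww1]
          simp
      _ = 2 * t.card := by ring
  -- main estimate
  have hkey : |(∑ ι' ∈ t, (cnt ι' : ℝ) * vz ι' i) - q * w i| ≤ 2 * t.card * (n * B) := by
    have : (∑ ι' ∈ t, (cnt ι' : ℝ) * vz ι' i) - q * w i
        = ∑ ι' ∈ t, ((cnt ι' : ℝ) - q * ww ι') * vz ι' i := by
      rw [hwcoord, Finset.mul_sum, ← Finset.sum_sub_distrib]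
      refine Finset.sum_congr rfl fun ι' _ => by ring
    rw [this]
    calc |∑ ι' ∈ t, ((cnt ι' : ℝ) - q * ww ι') * vz ι' i|
        ≤ ∑ ι' ∈ t, |((cnt ι' : ℝ) - q * ww ι') * vz ι' i| := Finset.abs_sum_le_sum_abs _ _
      _ ≤ ∑ ι' ∈ t, |(cnt ι' : ℝ) - q * ww ι'| * (n * B) := by
          refine Finset.sum_le_sum fun ι' h => ?_
          rw [abs_mul]
          exact mul_le_mul_of_nonneg_left (hvzB ι' h) (abs_nonneg _)
      _ = (∑ ι' ∈ t, |(cnt ι' : ℝ) - q * ww ι'|) * (n * B) := by rw [Finset.sum_mul]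
      _ ≤ 2 * t.card * (n * B) := by
          apply mul_le_mul_of_nonneg_right hdiscsum
          positivity
  have hQbig : 2 * (t.card : ℝ) * B ≤ Q * δ / 4 := by
    have h1 : (8 * t.card * B) / δ ≤ (Q : ℝ) := by
      rw [hQ]
      push_cast
      calc (8 * (t.card:ℝ) * B) / δ ≤ ⌈(8 * (t.card:ℝ) * B) / δ⌉₊ := Nat.le_ceil _
        _ ≤ ⌈(8 * (t.card:ℝ) * B) / δ⌉₊ + 1 := by linarith
    have h2 : 8 * (t.card:ℝ) * B ≤ Q * δ := by
      rw [div_le_iff₀ hδ] at h1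
      linarith
    nlinarith
  rw [hsum]
  have hQq : (Q:ℝ) * δ / 4 ≤ (q:ℝ) * δ / 4 := by
    have := mul_le_mul_of_nonneg_right hqQ hδ.le
    linarith
  have hIc := hIi i
  have hqnn : (0:ℝ) ≤ q := Nat.cast_nonneg q
  calc |(∑ ι' ∈ t, (cnt ι' : ℝ) * vz ι' i) - q * n * ∫ x, φ i x ∂μ|
      ≤ |(∑ ι' ∈ t, (cnt ι' : ℝ) * vz ι' i) - q * w i| + |q * w i - q * n * ∫ x, φ i x ∂μ| := by
        exact abs_sub_le _ _ _ |>.trans (by rw [])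
    _ ≤ 2 * t.card * (n * B) + q * ((n:ℝ) * δ / 4) := by
        refine add_le_add hkey ?_
        have : (q:ℝ) * w i - q * n * ∫ x, φ i x ∂μ = q * (w i - (∫ x, v x ∂μ) i) := by
          rw [hIc]; ring
        rw [this, abs_mul, abs_of_nonneg hqnn]
        refine mul_le_mul_of_nonneg_left ?_ hqnn
        rw [abs_sub_comm]
        exact hwIi
    _ ≤ (n:ℝ) * (Q * δ / 4) + q * ((n:ℝ) * δ / 4) := by
        have : 2 * (t.card:ℝ) * (n * B) = (n:ℝ) * (2 * t.card * B) := by ring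
        rw [this]
        refine add_le_add_left (mul_le_mul_of_nonneg_left hQbig (Nat.cast_nonneg n)) _
    _ ≤ (q:ℝ) * n * δ := by
        have hA : (n:ℝ) * δ * Q ≤ (n:ℝ) * δ * q :=
          mul_le_mul_of_nonneg_left hqQ (mul_nonneg (Nat.cast_nonneg n) hδ.le)
        have hBB : (0:ℝ) ≤ (q:ℝ) * (n:ℝ) * δ :=
          mul_nonneg (mul_nonneg hqnn (Nat.cast_nonneg n)) hδ.le
        nlinarith

set_option maxHeartbeats 1000000 in
lemma exists_good_orbit {f : X → X} (hf : Continuous f) (hspec : SpecificationProperty f)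
    {μ : Measure X} [IsProbabilityMeasure μ] (hinv : MeasurePreserving f μ μ)
    (k : ℕ) (φ : Fin k → C(X, ℝ)) {δ : ℝ} (hδ : 0 < δ) (N : ℕ) :
    ∃ n : ℕ, N ≤ n ∧ 0 < n ∧ ∃ y : X, ∀ i,
      |birkhoffSum f (φ i) n y - n * ∫ x, φ i x ∂μ| ≤ n * δ := by
  classical
  set B : ℝ := (∑ i, ‖φ i‖) + 1 with hB
  have hB0 : 0 < B := by
    have : (0:ℝ) ≤ ∑ i, ‖φ i‖ := Finset.sum_nonneg fun i _ => norm_nonneg _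
    linarith
  have hφB : ∀ (i : Fin k) (u : X), |φ i u| ≤ B := by
    intro i u
    have h1 : ‖φ i u‖ ≤ ‖φ i‖ := ContinuousMap.norm_coe_le_norm _ _
    have h2 : ‖φ i‖ ≤ ∑ j, ‖φ j‖ :=
      Finset.single_le_sum (fun j _ => norm_nonneg (φ j)) (Finset.mem_univ i)
    rw [Real.norm_eq_abs] at h1; linarith
  have hαB : ∀ i : Fin k, |∫ x, φ i x ∂μ| ≤ B := by
    intro i
    rw [← Real.norm_eq_abs]
    refine (MeasureTheory.norm_integral_le_of_norm_le_const (C := B)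
      (Eventually.of_forall fun x => by rw [Real.norm_eq_abs]; exact hφB i x)).trans ?_
    simp [measure_univ]
  obtain ⟨r, hr0, hr⟩ := exists_modulus_fin k φ (d := δ/4) (by positivity)
  obtain ⟨m, hm⟩ := hspec r hr0
  set n : ℕ := max (N + 1) (⌈8 * m * B / δ⌉₊ + 1) with hndef
  have hn0 : 0 < n := lt_of_lt_of_le (Nat.succ_pos N) (le_max_left _ _)
  have hnN : N ≤ n := le_trans (Nat.le_succ N) (le_max_left _ _)
  have hgapB : (m:ℝ) * B ≤ (n:ℝ) * δ / 8 := by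
    have h1 : (8 * m * B / δ) ≤ (n : ℝ) := by
      calc (8 * (m:ℝ) * B / δ) ≤ ⌈8 * (m:ℝ) * B / δ⌉₊ := Nat.le_ceil _
        _ ≤ ((⌈8 * (m:ℝ) * B / δ⌉₊ + 1 : ℕ) : ℝ) := by push_cast; linarith
        _ ≤ (n : ℝ) := by
            have h0 : (⌈8 * (m:ℝ) * B / δ⌉₊ + 1 : ℕ) ≤ n := by
              rw [hndef]; exact le_max_right _ _
            exact_mod_cast h0
    rw [div_le_iff₀ hδ] at h1
    nlinarith
  obtain ⟨q, hq0, z, hz⟩ := barycenter hf hinv k φ (show 0 < δ/4 by positivity) hn0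
  -- specification gluing
  set a : Fin q → ℕ := fun j => j * (n + m) with ha
  set b : Fin q → ℕ := fun j => j * (n + m) + (n - 1) with hb
  have hab : ∀ j, a j ≤ b j := fun j => Nat.le_add_right _ _
  have hgap : ∀ (j : Fin q) (hj : (j : ℕ) + 1 < q), b j + m ≤ a ⟨(j : ℕ) + 1, hj⟩ := by
    intro j hj
    show (j:ℕ) * (n + m) + (n - 1) + m ≤ ((j:ℕ) + 1) * (n + m)
    rw [add_one_mul, add_assoc]
    exact Nat.add_le_add_left (by omega) _
  obtain ⟨y, hy⟩ := hm q a b z hab hgap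
  have hba : ∀ j : Fin q, b j - a j = n - 1 := fun j => by simp [ha, hb]
  refine ⟨q * (n + m), le_trans hnN (by nlinarith [Nat.le_add_right n m]), by positivity, y, ?_⟩
  intro i
  set α : ℝ := ∫ x, φ i x ∂μ with hα
  -- chunk estimates
  have hchunk : ∀ j : Fin q,
      |(∑ p ∈ Finset.range (n + m), φ i (f^[(j:ℕ) * (n + m) + p] y))
        - birkhoffSum f (φ i) n (z j)| ≤ n * (δ/4) + m * B := by
    intro j
    rw [Finset.sum_range_add]
    have h1 : |(∑ p ∈ Finset.range n, φ i (f^[(j:ℕ) * (n + m) + p] y))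
        - birkhoffSum f (φ i) n (z j)| ≤ n * (δ/4) := by
      unfold birkhoffSum
      rw [← Finset.sum_sub_distrib]
      refine (Finset.abs_sum_le_sum_abs _ _).trans ?_
      have : ∀ p ∈ Finset.range n, |φ i (f^[(j:ℕ) * (n + m) + p] y) - φ i (f^[p] (z j))| ≤ δ/4 := by
        intro p hp
        rw [Finset.mem_range] at hp
        have hple : p ≤ b j - a j := by rw [hba]; omega
        have hd := hy j p hple
        have heq : p + a j = (j:ℕ) * (n + m) + p := by simp [ha]; omega
        rw [heq] at hd
        exact hr i _ _ hd.le
      refine (Finset.sum_le_sum this).trans ?_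
      rw [Finset.sum_const, Finset.card_range, nsmul_eq_mul]
    have h2 : |∑ p ∈ Finset.range m, φ i (f^[(j:ℕ) * (n + m) + (n + p)] y)| ≤ m * B := by
      refine (Finset.abs_sum_le_sum_abs _ _).trans ?_
      refine (Finset.sum_le_sum fun p _ => hφB i _).trans ?_
      rw [Finset.sum_const, Finset.card_range, nsmul_eq_mul]
    calc |(∑ p ∈ Finset.range n, φ i (f^[(j:ℕ) * (n + m) + p] y))
          + (∑ p ∈ Finset.range m, φ i (f^[(j:ℕ) * (n + m) + (n + p)] y))
          - birkhoffSum f (φ i) n (z j)|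
        ≤ |(∑ p ∈ Finset.range n, φ i (f^[(j:ℕ) * (n + m) + p] y))
            - birkhoffSum f (φ i) n (z j)|
          + |∑ p ∈ Finset.range m, φ i (f^[(j:ℕ) * (n + m) + (n + p)] y)| := by
          rw [add_sub_right_comm]
          exact abs_add_le _ _
      _ ≤ n * (δ/4) + m * B := add_le_add h1 h2
  -- total
  have hsplit : birkhoffSum f (φ i) (q * (n + m)) y
      = ∑ j ∈ Finset.range q, ∑ p ∈ Finset.range (n + m), φ i (f^[j * (n + m) + p] y) :=
    sum_range_mul_eq (fun p => φ i (f^[p] y)) q (n + m)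
  have hsum1 : |birkhoffSum f (φ i) (q * (n + m)) y - ∑ j : Fin q, birkhoffSum f (φ i) n (z j)|
      ≤ q * (n * (δ/4) + m * B) := by
    rw [hsplit, ← Fin.sum_univ_eq_sum_range
      (fun j => ∑ p ∈ Finset.range (n + m), φ i (f^[j * (n + m) + p] y)) q,
      ← Finset.sum_sub_distrib]
    refine (Finset.abs_sum_le_sum_abs _ _).trans ?_
    refine (Finset.sum_le_sum fun j _ => hchunk j).trans ?_
    rw [Finset.sum_const, Finset.card_univ, Fintype.card_fin, nsmul_eq_mul]
  have hsum2 := hz i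
  rw [← hα] at hsum2
  have hsum3 : |(q:ℝ) * n * α - (q * (n + m) : ℕ) * α| ≤ q * m * B := by
    have : (q:ℝ) * n * α - (q * (n + m) : ℕ) * α = -(q * m * α) := by push_cast; ring
    rw [this, abs_neg, abs_mul, abs_mul, abs_of_nonneg (Nat.cast_nonneg (α := ℝ) q),
      abs_of_nonneg (Nat.cast_nonneg (α := ℝ) m)]
    exact mul_le_mul_of_nonneg_left (hαB i) (by positivity)
  have htot : |birkhoffSum f (φ i) (q * (n + m)) y - (q * (n + m) : ℕ) * α|
      ≤ q * (n * (δ/4) + m * B) + (q * n * (δ/4) + q * m * B) := by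
    calc |birkhoffSum f (φ i) (q * (n + m)) y - (q * (n + m) : ℕ) * α|
        ≤ |birkhoffSum f (φ i) (q * (n + m)) y - ∑ j : Fin q, birkhoffSum f (φ i) n (z j)|
          + |(∑ j : Fin q, birkhoffSum f (φ i) n (z j)) - (q * (n + m) : ℕ) * α| :=
          abs_sub_le _ _ _
      _ ≤ (q * (n * (δ/4) + m * B) : ℝ)
          + (|(∑ j : Fin q, birkhoffSum f (φ i) n (z j)) - (q:ℝ) * n * α|
            + |(q:ℝ) * n * α - (q * (n + m) : ℕ) * α|) :=
          add_le_add hsum1 (abs_sub_le _ _ _)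
      _ ≤ (q * (n * (δ/4) + m * B) : ℝ) + ((q:ℝ) * n * (δ/4) + q * m * B) :=
          add_le_add_right (add_le_add hsum2 hsum3) _
  refine htot.trans ?_
  have hcast : ((q * (n + m) : ℕ) : ℝ) = (q:ℝ) * (n + m) := by push_cast; ring
  rw [hcast]
  have hq0' : (0:ℝ) < q := by exact_mod_cast hq0
  have hn0' : (0:ℝ) < n := by exact_mod_cast hn0
  have hm0' : (0:ℝ) ≤ m := Nat.cast_nonneg m
  have hqmB : (q:ℝ) * (↑m * B) ≤ (q:ℝ) * (↑n * δ / 8) :=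
    mul_le_mul_of_nonneg_left hgapB hq0'.le
  have hqmδ : (0:ℝ) ≤ (q:ℝ) * ↑m * δ := by positivity
  nlinarith [hqmB, hqmδ]

end GenericPointAux

set_option maxHeartbeats 2000000 in
/-- For a map with the specification property, every invariant Borel probability measure
(not necessarily ergodic) has a generic point. -/
theorem exists_generic_point_of_specification
    {X : Type*} [MetricSpace X] [CompactSpace X] [MeasurableSpace X] [BorelSpace X]
    (f : X → X) (hf : Continuous f) (hspec : SpecificationProperty f)
    (μ : Measure X) (hμ : IsProbabilityMeasure μ) (hinv : MeasurePreserving f μ μ) :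
    ∃ x : X, ∀ φ : X → ℝ, Continuous φ →
      Tendsto (fun n : ℕ => birkhoffSum f φ n x / n) atTop (𝓝 (∫ y, φ y ∂μ)) := by
    classical
  haveI := hμ
  have hne : Nonempty X := by
    rcases isEmpty_or_nonempty X with h | h
    · exfalso
      have h1 : (μ Set.univ) = 1 := measure_univ
      rw [Set.univ_eq_empty_iff.mpr h, measure_empty] at h1
      exact zero_ne_one h1
    · exact h
  -- dense sequence of continuous functions
  obtain ⟨ψ, hψ⟩ : ∃ ψ : ℕ → C(X, ℝ), DenseRange ψ :=
    ⟨TopologicalSpace.denseSeq _, TopologicalSpace.denseRange_denseSeq _⟩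
  set α : ℕ → ℝ := fun j => ∫ x, ψ j x ∂μ with hα
  set δ : ℕ → ℝ := fun k => 1 / (k + 1) with hδdef
  have hδpos : ∀ k, 0 < δ k := fun k => by positivity
  -- moduli of continuity
  have hmod : ∀ k : ℕ, ∃ r : ℝ, 0 < r ∧
      ∀ j ≤ k, ∀ u v : X, dist u v ≤ r → |ψ j u - ψ j v| ≤ δ k := by
    intro k
    obtain ⟨r, hr0, hr⟩ := exists_modulus_fin (k+1) (fun i : Fin (k+1) => ψ i) (hδpos k)
    exact ⟨r, hr0, fun j hj u v h => hr ⟨j, by omega⟩ u v h⟩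
  choose r0 hr00 hr0mod using hmod
  set ρ : ℕ → ℝ := fun k => (Finset.range (k+1)).inf'
    (Finset.nonempty_range_iff.mpr (Nat.succ_ne_zero k)) r0 with hρdef
  have hρpos : ∀ k, 0 < ρ k := fun k =>
    (Finset.lt_inf'_iff _).mpr fun j _ => hr00 j
  have hρle : ∀ k, ρ k ≤ r0 k := fun k =>
    Finset.inf'_le r0 (Finset.mem_range.mpr (Nat.lt_succ_self k))
  have hρanti : ∀ k K, k ≤ K → ρ K ≤ ρ k := by
    intro k K hkK
    refine Finset.le_inf' _ _ fun j hj => ?_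
    refine Finset.inf'_le r0 (Finset.mem_range.mpr ?_)
    rw [Finset.mem_range] at hj
    omega
  have hρmod : ∀ k, ∀ j ≤ k, ∀ u v : X, dist u v ≤ ρ k → |ψ j u - ψ j v| ≤ δ k :=
    fun k j hj u v h => hr0mod k j hj u v (h.trans (hρle k))
  -- scales
  set ε : ℕ → ℝ := fun k => ρ k * (1/2)^(k+1) with hεdef
  have hεpos : ∀ k, 0 < ε k := fun k => by
    have := hρpos k; positivity
  have hεle : ∀ k, ε k ≤ ρ k * (1/2)^(k+1) := fun k => le_refl _
  have hεsum : ∀ k K, k ≤ K → ∑ l ∈ Finset.Icc k K, ε l ≤ ρ k := by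
    intro k K hkK
    have h1 : ∑ l ∈ Finset.Icc k K, ε l ≤ ∑ l ∈ Finset.Icc k K, ρ k * (1/2)^(l+1) := by
      refine Finset.sum_le_sum fun l hl => ?_
      rw [Finset.mem_Icc] at hl
      exact mul_le_mul_of_nonneg_right (hρanti k l hl.1) (by positivity)
    have h2 : ∀ K', k ≤ K' → ∑ l ∈ Finset.Icc k K', ((1:ℝ)/2)^(l+1) = (1/2)^k - (1/2)^(K'+1) := by
      intro K' hK'
      induction K', hK' using Nat.le_induction with
      | base => rw [Finset.Icc_self, Finset.sum_singleton]; ring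
      | succ K' hK' ih =>
        rw [Finset.sum_Icc_succ_top (by omega), ih]; ring
    have h3 : ∑ l ∈ Finset.Icc k K, ρ k * (1/2)^(l+1) = ρ k * ((1/2)^k - (1/2)^(K+1)) := by
      rw [← Finset.mul_sum, h2 K hkK]
    have h4 : ((1:ℝ)/2)^k ≤ 1 := pow_le_one₀ (by norm_num) (by norm_num)
    have h5 : (0:ℝ) < (1/2)^(K+1) := by positivity
    have h6 := hρpos k
    nlinarith [h1, h3]
  -- specification constants
  choose m hm using fun k => hspec (ε k) (hεpos k)
  set γ : ℕ → ℕ := fun k => max (m k) (m (k+1)) with hγdef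
  -- good orbit segments
  have horb : ∀ k : ℕ, ∃ (nn : ℕ) (zz : X), (k * γ k + 1 ≤ nn) ∧ 0 < nn ∧
      ∀ j ≤ k, |birkhoffSum f (ψ j) nn zz - nn * α j| ≤ nn * δ k := by
    intro k
    obtain ⟨nn, hnn1, hnn2, zz, hzz⟩ := exists_good_orbit hf hspec hinv (k+1)
      (fun i : Fin (k+1) => ψ i) (hδpos k) (k * γ k + 1)
    exact ⟨nn, zz, hnn1, hnn2, fun j hj => hzz ⟨j, by omega⟩⟩
  choose n z hn1 hn0 hz using horb
  set c : ℕ → ℕ := fun k => n k + γ k with hcdef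
  have hc0 : ∀ k, 0 < c k := fun k => by have := hn0 k; simp only [hcdef]; omega
  set R : ℕ → ℕ := fun k => (k + 2) * c (k + 1) with hRdef
  have hR0 : ∀ k, 0 < R k := fun k => by
    have := hc0 (k+1); simp only [hRdef]; positivity
  set L : ℕ → ℕ := fun K => Nat.rec (m 0 + 1) (fun k' Lk => Lk + R k' * c k') K with hLdef
  have hL0 : L 0 = m 0 + 1 := rfl
  have hLsucc : ∀ k, L (k+1) = L k + R k * c k := fun k => rfl
  set E : ℕ → ℕ := fun K => Nat.rec 0
    (fun k' _ => L k' + (R k' - 1) * c k' + (n k' - 1)) K with hEdef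
  have hE0 : E 0 = 0 := rfl
  have hEsucc : ∀ k, E (k+1) = L k + (R k - 1) * c k + (n k - 1) := fun k => rfl
  have hLE : ∀ k, E (k+1) + 1 + γ k = L (k+1) := by
    intro k
    have h1 : (R k - 1) * c k + c k = R k * c k := by
      obtain ⟨r', hr'⟩ : ∃ r', R k = r' + 1 := ⟨R k - 1, by have := hR0 k; omega⟩
      rw [hr', Nat.add_sub_cancel, Nat.add_mul, one_mul]
    have h2 := hn0 k
    rw [hEsucc, hLsucc]
    simp only [hcdef] at h1 ⊢
    omega
  have hEL : ∀ k, E k < L k := by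
    intro k
    cases k with
    | zero => rw [hE0, hL0]; omega
    | succ k => have := hLE k; omega
  have hLEnext : ∀ k, L k ≤ E (k+1) := by
    intro k
    rw [hEsucc]
    omega
  have hEmono : Monotone E := by
    apply monotone_nat_of_le_succ
    intro k
    exact le_trans (hEL k).le (hLEnext k)
  have hblockpos : ∀ k, ∀ r < R k, ∀ p < n k, L k + r * c k + p ≤ E (k+1) := by
    intro k r hr p hp
    rw [hEsucc]
    have h1 : r * c k ≤ (R k - 1) * c k := Nat.mul_le_mul_right _ (by omega)
    omega
  have hLc : ∀ k, 1 ≤ k → (k + 1) * c k ≤ L k := by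
    intro k hk
    cases k with
    | zero => omega
    | succ k' =>
      have h1 : (k' + 1 + 1) * c (k' + 1) = R k' := rfl
      rw [hLsucc, h1]
      calc R k' ≤ R k' * c k' := Nat.le_mul_of_pos_right _ (hc0 k')
        _ ≤ L k' + R k' * c k' := Nat.le_add_left _ _
  have hLgt : ∀ k, k < L k := by
    intro k
    induction k with
    | zero => rw [hL0]; omega
    | succ k ih =>
      have h1 : 1 ≤ R k * c k := Nat.one_le_iff_ne_zero.mpr
        (Nat.mul_ne_zero (hR0 k).ne' (hc0 k).ne')
      have := hLsucc k
      omega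
  have hEmL : ∀ k, E k + m k < L k := by
    intro k
    cases k with
    | zero => rw [hE0, hL0]; omega
    | succ k =>
      have h1 := hLE k
      have h2 : m (k+1) ≤ γ k := le_max_right _ _
      omega
  -- the inductive specification call
  have call : ∀ (k : ℕ) (w : X), ∃ y' : X,
      (∀ i ≤ E k, dist (f^[i] y') (f^[i] w) < ε k) ∧
      (∀ r < R k, ∀ p < n k, dist (f^[L k + r * c k + p] y') (f^[p] (z k)) < ε k) := by
    intro k w
    set K := R k + 1 with hKdef
    set aa : Fin K → ℕ := fun j => if (j:ℕ) = 0 then 0 else L k + ((j:ℕ) - 1) * c k with haa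
    set bb : Fin K → ℕ := fun j =>
      if (j:ℕ) = 0 then E k else L k + ((j:ℕ) - 1) * c k + (n k - 1) with hbb
    set xx : Fin K → X := fun j => if (j:ℕ) = 0 then w else z k with hxx
    have hab : ∀ j, aa j ≤ bb j := by
      intro j
      by_cases h : (j:ℕ) = 0
      · simp only [haa, hbb]; rw [if_pos h, if_pos h]; exact Nat.zero_le _
      · simp only [haa, hbb]; rw [if_neg h, if_neg h]; exact Nat.le_add_right _ _
    have hsep : ∀ (j : Fin K) (hj : (j : ℕ) + 1 < K), bb j + m k ≤ aa ⟨(j : ℕ) + 1, hj⟩ := by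
      intro j hj
      by_cases h : (j:ℕ) = 0
      · have h1 := hEmL k
        have h' : j = 0 := by simpa using h
        simp [haa, hbb, h, h']
        omega
      · simp only [haa, hbb, if_neg h, if_neg (by omega : ¬((j:ℕ) + 1 = 0))]
        have h2 : ((j:ℕ) + 1 - 1) * c k = ((j:ℕ) - 1) * c k + c k := by
          have : (j:ℕ) + 1 - 1 = ((j:ℕ) - 1) + 1 := by omega
          rw [this, Nat.succ_mul]
        have h3 : m k ≤ γ k := le_max_left _ _
        have h4 := hn0 k
        have h5 : c k = n k + γ k := rfl
        omega
    obtain ⟨y', hy'⟩ := hm k K aa bb xx hab hsep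
    refine ⟨y', ?_, ?_⟩
    · intro i hi
      have h0 : (0:ℕ) < K := by omega
      have h2 : aa ⟨0, h0⟩ = 0 := rfl
      have h3 : bb ⟨0, h0⟩ = E k := rfl
      have h4 : xx ⟨0, h0⟩ = w := rfl
      have h5 := hy' ⟨0, h0⟩ i (by rw [h3, h2]; omega)
      rw [h2, h4] at h5
      simpa using h5
    · intro r hr p hp
      have hrK : r + 1 < K := by omega
      have h2 : aa ⟨r + 1, hrK⟩ = L k + r * c k := rfl
      have h3 : bb ⟨r + 1, hrK⟩ = L k + r * c k + (n k - 1) := rfl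
      have h4 : xx ⟨r + 1, hrK⟩ = z k := rfl
      have h5 := hy' ⟨r + 1, hrK⟩ p (by rw [h3, h2]; omega)
      rw [h2, h4] at h5
      have heq : p + (L k + r * c k) = L k + r * c k + p := by omega
      rwa [heq] at h5
  -- the sequence of approximations
  set x₀ : X := Classical.arbitrary X with hx₀
  set y : ℕ → X := fun K => Nat.rec x₀ (fun k yk => (call k yk).choose) K with hydef
  have hy1 : ∀ k, ∀ i ≤ E k, dist (f^[i] (y (k+1))) (f^[i] (y k)) < ε k :=
    fun k => (call k (y k)).choose_spec.1
  have hy2 : ∀ k, ∀ r < R k, ∀ p < n k,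
      dist (f^[L k + r * c k + p] (y (k+1))) (f^[p] (z k)) < ε k :=
    fun k => (call k (y k)).choose_spec.2
  -- shadowing estimate for the approximations
  have shadow : ∀ K k, k ≤ K → ∀ r < R k, ∀ p < n k,
      dist (f^[L k + r * c k + p] (y (K+1))) (f^[p] (z k)) ≤ ∑ l ∈ Finset.Icc k K, ε l := by
    intro K
    induction K with
    | zero =>
      intro k hk r hr p hp
      interval_cases k
      simpa [Finset.Icc_self] using (hy2 0 r hr p hp).le
    | succ K ih =>
      intro k hk r hr p hp
      rcases Nat.lt_or_ge k (K+1) with h | h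
      · have hkK : k ≤ K := by omega
        have hpos : L k + r * c k + p ≤ E (K+1) :=
          le_trans (hblockpos k r hr p hp) (hEmono (by omega : k + 1 ≤ K + 1))
        calc dist (f^[L k + r * c k + p] (y (K+2))) (f^[p] (z k))
            ≤ dist (f^[L k + r * c k + p] (y (K+2))) (f^[L k + r * c k + p] (y (K+1)))
              + dist (f^[L k + r * c k + p] (y (K+1))) (f^[p] (z k)) := dist_triangle _ _ _
          _ ≤ ε (K+1) + ∑ l ∈ Finset.Icc k K, ε l :=
              add_le_add (hy1 (K+1) _ hpos).le (ih k hkK r hr p hp)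
          _ = ∑ l ∈ Finset.Icc k (K+1), ε l := by
              rw [Finset.sum_Icc_succ_top (by omega : k ≤ K + 1)]
              ring
      · have : k = K + 1 := by omega
        subst this
        refine (hy2 (K+1) r hr p hp).le.trans ?_
        rw [Finset.Icc_self, Finset.sum_singleton]
  -- Cauchy sequence and limit point
  have hcauchy : CauchySeq y := by
    apply cauchySeq_of_le_geometric (1/2 : ℝ) (dist (y 0) (y 1) + ρ 0) (by norm_num)
    intro K
    cases K with
    | zero =>
      simp only [pow_zero, mul_one, zero_add]
      linarith [(hρpos 0).le]
    | succ K =>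
      have h1 := hy1 (K+1) 0 (Nat.zero_le _)
      simp only [Function.iterate_zero, id_eq] at h1
      rw [dist_comm] at h1
      have h2 : ε (K+1) ≤ ρ 0 * (1/2)^(K+1) := by
        have h3 : ρ (K+1) ≤ ρ 0 := hρanti 0 (K+1) (Nat.zero_le _)
        have h4 : ((1:ℝ)/2)^(K+2) ≤ (1/2)^(K+1) :=
          pow_le_pow_of_le_one (by norm_num) (by norm_num) (by omega)
        calc ε (K+1) = ρ (K+1) * (1/2)^(K+2) := rfl
          _ ≤ ρ 0 * (1/2)^(K+1) := by
              apply mul_le_mul h3 h4 (by positivity) (hρpos 0).le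
      have h5 : (0:ℝ) ≤ dist (y 0) (y 1) := dist_nonneg
      have h6 : (0:ℝ) ≤ (1/2:ℝ)^(K+1) := by positivity
      calc dist (y (K+1)) (y (K+2)) ≤ ρ 0 * (1/2)^(K+1) := h1.le.trans h2
        _ ≤ (dist (y 0) (y 1) + ρ 0) * (1/2)^(K+1) := by nlinarith
  obtain ⟨x, hx⟩ := cauchySeq_tendsto_of_complete hcauchy
  -- the key shadowing property of the limit point
  have hkey : ∀ k, ∀ r < R k, ∀ p < n k,
      dist (f^[L k + r * c k + p] x) (f^[p] (z k)) ≤ ρ k := by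
    intro k r hr p hp
    set i := L k + r * c k + p with hidef
    have h1 : Tendsto (fun K => y (K+1)) atTop (𝓝 x) :=
      hx.comp (tendsto_add_atTop_nat 1)
    have h2 : Tendsto (fun K => f^[i] (y (K+1))) atTop (𝓝 (f^[i] x)) :=
      ((hf.iterate i).tendsto x).comp h1
    have h3 : Tendsto (fun K => dist (f^[i] (y (K+1))) (f^[p] (z k))) atTop
        (𝓝 (dist (f^[i] x) (f^[p] (z k)))) := h2.dist tendsto_const_nhds
    refine le_of_tendsto h3 (eventually_atTop.mpr ⟨k, fun K hK => ?_⟩)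
    exact (shadow K k hK r hr p hp).trans (hεsum k K hK)
  -- Birkhoff sums along x
  set Sx : ℕ → ℕ → ℝ := fun j t => ∑ p ∈ Finset.range t, ψ j (f^[p] x) with hSxdef
  have hSbirk : ∀ j t, birkhoffSum f (ψ j) t x = Sx j t := fun j t => rfl
  have habs2 : ∀ u v : ℝ, |u - v| ≤ |u| + |v| := fun u v => by
    have := abs_add_le u (-v); simpa [sub_eq_add_neg] using this
  have hcore : ∀ (j : ℕ) (θ : ℝ), 0 < θ → ∃ N : ℕ, ∀ nn, N ≤ nn →
      |Sx j nn - nn * α j| ≤ nn * θ := by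
    intro j θ hθ
    set C : ℝ := ‖ψ j‖ + 1 with hCdef
    have hC0 : 0 < C := by positivity
    have hψC : ∀ u : X, |ψ j u| ≤ C := by
      intro u
      have h1 : ‖ψ j u‖ ≤ ‖ψ j‖ := ContinuousMap.norm_coe_le_norm _ _
      rw [Real.norm_eq_abs] at h1; linarith
    have hαj : α j = ∫ u, ψ j u ∂μ := rfl
    have hαC : |α j| ≤ C := by
      rw [hαj, ← Real.norm_eq_abs]
      refine (MeasureTheory.norm_integral_le_of_norm_le_const (C := C)
        (Eventually.of_forall fun u => by rw [Real.norm_eq_abs]; exact hψC u)).trans ?_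
      simp [measure_univ]
    set θ₁ : ℝ := θ / 4 with hθ₁def
    have hθ₁ : 0 < θ₁ := by positivity
    -- adding a crude segment
    have hDstep : ∀ a s : ℕ,
        |Sx j (a + s) - (a + s : ℕ) * α j| ≤ |Sx j a - a * α j| + s * (2*C) := by
      intro a s
      have h1 : Sx j (a+s) = Sx j a + ∑ p ∈ Finset.range s, ψ j (f^[a + p] x) :=
        Finset.sum_range_add _ a s
      have h2 : |∑ p ∈ Finset.range s, ψ j (f^[a + p] x) - s * α j| ≤ s * (2*C) := by
        calc |∑ p ∈ Finset.range s, ψ j (f^[a + p] x) - s * α j|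
            = |∑ p ∈ Finset.range s, (ψ j (f^[a + p] x) - α j)| := by
              rw [Finset.sum_sub_distrib, Finset.sum_const, Finset.card_range, nsmul_eq_mul]
          _ ≤ ∑ p ∈ Finset.range s, |ψ j (f^[a + p] x) - α j| := Finset.abs_sum_le_sum_abs _ _
          _ ≤ ∑ _p ∈ Finset.range s, (2*C) := Finset.sum_le_sum fun p _ => by
              have := habs2 (ψ j (f^[a+p] x)) (α j)
              have := hψC (f^[a+p] x)
              linarith [hαC]
          _ = s * (2*C) := by rw [Finset.sum_const, Finset.card_range, nsmul_eq_mul]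
      have h3 : Sx j (a+s) - ((a+s:ℕ):ℝ) * α j
          = (Sx j a - a * α j) + ((∑ p ∈ Finset.range s, ψ j (f^[a + p] x)) - s * α j) := by
        rw [h1]; push_cast; ring
      rw [h3]
      exact (abs_add_le _ _).trans (by linarith [h2])
    -- estimate over one block-with-gap of stage k
    have hchunk : ∀ k, j ≤ k → ∀ r, r < R k →
        |(∑ p ∈ Finset.range (c k), ψ j (f^[(L k + r * c k) + p] x)) - (c k : ℝ) * α j|
          ≤ (n k : ℝ) * (2 * δ k) + (γ k : ℝ) * (2 * C) := by
      intro k hjk r hr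
      have hsplit : ∑ p ∈ Finset.range (c k), ψ j (f^[(L k + r * c k) + p] x)
          = (∑ p ∈ Finset.range (n k), ψ j (f^[(L k + r * c k) + p] x))
            + ∑ p ∈ Finset.range (γ k), ψ j (f^[(L k + r * c k) + (n k + p)] x) := by
        have hck : c k = n k + γ k := rfl
        rw [hck]
        exact Finset.sum_range_add _ _ _
      have h1 : |(∑ p ∈ Finset.range (n k), ψ j (f^[(L k + r * c k) + p] x))
          - birkhoffSum f (ψ j) (n k) (z k)| ≤ (n k : ℝ) * δ k := by
        unfold birkhoffSum
        rw [← Finset.sum_sub_distrib]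
        refine (Finset.abs_sum_le_sum_abs _ _).trans ?_
        have hb : ∀ p ∈ Finset.range (n k),
            |ψ j (f^[(L k + r * c k) + p] x) - ψ j (f^[p] (z k))| ≤ δ k := by
          intro p hp
          rw [Finset.mem_range] at hp
          exact hρmod k j hjk _ _ (hkey k r hr p hp)
        refine (Finset.sum_le_sum hb).trans ?_
        rw [Finset.sum_const, Finset.card_range, nsmul_eq_mul]
      have h2 := hz k j hjk
      have h3 : |∑ p ∈ Finset.range (γ k), ψ j (f^[(L k + r * c k) + (n k + p)] x)|
          ≤ (γ k : ℝ) * C := by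
        refine (Finset.abs_sum_le_sum_abs _ _).trans ?_
        refine (Finset.sum_le_sum fun p _ => hψC _).trans ?_
        rw [Finset.sum_const, Finset.card_range, nsmul_eq_mul]
      have h4 : |(n k : ℝ) * α j - (c k : ℝ) * α j| ≤ (γ k : ℝ) * C := by
        have hck : (c k : ℝ) = (n k : ℝ) + (γ k : ℝ) := by
          have : c k = n k + γ k := rfl
          rw [this]; push_cast; ring
        have h5 : (n k : ℝ) * α j - (c k : ℝ) * α j = -((γ k : ℝ) * α j) := by
          rw [hck]; ring
        rw [h5, abs_neg, abs_mul, abs_of_nonneg (Nat.cast_nonneg (α := ℝ) (γ k))]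
        exact mul_le_mul_of_nonneg_left hαC (Nat.cast_nonneg _)
      have h6 : (∑ p ∈ Finset.range (c k), ψ j (f^[(L k + r * c k) + p] x)) - (c k : ℝ) * α j
          = ((∑ p ∈ Finset.range (n k), ψ j (f^[(L k + r * c k) + p] x))
              - birkhoffSum f (ψ j) (n k) (z k))
            + (birkhoffSum f (ψ j) (n k) (z k) - (n k : ℝ) * α j)
            + (∑ p ∈ Finset.range (γ k), ψ j (f^[(L k + r * c k) + (n k + p)] x))
            + ((n k : ℝ) * α j - (c k : ℝ) * α j) := by
        rw [hsplit]; ring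
      rw [h6]
      calc |_ + _ + _ + _|
          ≤ |_ + _ + _| + |(n k : ℝ) * α j - (c k : ℝ) * α j| := abs_add_le _ _
        _ ≤ (|_ + _| + |∑ p ∈ Finset.range (γ k), ψ j (f^[(L k + r * c k) + (n k + p)] x)|)
            + |(n k : ℝ) * α j - (c k : ℝ) * α j| := by
            exact add_le_add_left (abs_add_le _ _) _
        _ ≤ ((|(∑ p ∈ Finset.range (n k), ψ j (f^[(L k + r * c k) + p] x))
              - birkhoffSum f (ψ j) (n k) (z k)|
              + |birkhoffSum f (ψ j) (n k) (z k) - (n k : ℝ) * α j|)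
            + |∑ p ∈ Finset.range (γ k), ψ j (f^[(L k + r * c k) + (n k + p)] x)|)
            + |(n k : ℝ) * α j - (c k : ℝ) * α j| := by
            exact add_le_add_left (add_le_add_left (abs_add_le _ _) _) _
        _ ≤ (n k : ℝ) * (2 * δ k) + (γ k : ℝ) * (2 * C) := by
            linarith [h1, h2, h3, h4]
    -- estimate over several blocks of stage k
    have hstage : ∀ k, j ≤ k → ∀ r, r ≤ R k →
        |Sx j (L k + r * c k) - ((L k + r * c k : ℕ) : ℝ) * α j|
          ≤ |Sx j (L k) - (L k : ℝ) * α j|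
            + (r : ℝ) * ((n k : ℝ) * (2 * δ k) + (γ k : ℝ) * (2 * C)) := by
      intro k hjk r
      induction r with
      | zero => intro _; simp
      | succ r ih =>
        intro hr
        have h0 : L k + (r+1) * c k = (L k + r * c k) + c k := by
          rw [Nat.succ_mul]; omega
        have h1 : Sx j (L k + (r+1) * c k) = Sx j (L k + r * c k)
            + ∑ p ∈ Finset.range (c k), ψ j (f^[(L k + r * c k) + p] x) := by
          rw [h0]; exact Finset.sum_range_add _ _ _
        have h2 := hchunk k hjk r (by omega)
        have h3 := ih (by omega)
        have h4 : Sx j (L k + (r+1) * c k) - ((L k + (r+1) * c k : ℕ) : ℝ) * α j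
            = (Sx j (L k + r * c k) - ((L k + r * c k : ℕ) : ℝ) * α j)
              + ((∑ p ∈ Finset.range (c k), ψ j (f^[(L k + r * c k) + p] x))
                - (c k : ℝ) * α j) := by
          rw [h1, h0]; push_cast; ring
        rw [h4]
        refine (abs_add_le _ _).trans ?_
        push_cast at h2 h3 ⊢
        linarith [h2, h3]
    -- cumulative estimate over stages
    have hcum : ∀ k K, j ≤ k → k ≤ K →
        |Sx j (L K) - (L K : ℝ) * α j| ≤ |Sx j (L k) - (L k : ℝ) * α j|
          + ∑ l ∈ Finset.Ico k K, (R l : ℝ) * ((n l : ℝ) * (2 * δ l) + (γ l : ℝ) * (2 * C)) := by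
      intro k K hjk hkK
      induction K, hkK using Nat.le_induction with
      | base => simp
      | succ K hkK ih =>
        have h1 := hstage K (by omega) (R K) (le_refl _)
        have h2 : L K + R K * c K = L (K+1) := (hLsucc K).symm
        rw [h2] at h1
        rw [Finset.sum_Ico_succ_top hkK]
        linarith [h1, ih]
    -- threshold stage
    set k₁ : ℕ := max (max j 1) (⌈(2 + 2*C)/θ₁⌉₊ + 1) with hk₁def
    have hk₁j : j ≤ k₁ := le_trans (le_max_left _ _) (le_max_left _ _)
    have hk₁1 : 1 ≤ k₁ := le_trans (le_max_right j 1) (le_max_left _ _)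
    have herr : ∀ l, k₁ ≤ l → (n l : ℝ) * (2 * δ l) + (γ l : ℝ) * (2 * C) ≤ θ₁ * c l := by
      intro l hl
      have hl1 : 1 ≤ l := le_trans hk₁1 hl
      have hl0 : (0:ℝ) < l := by exact_mod_cast hl1
      have hlc : (2 + 2*C) ≤ θ₁ * l := by
        have h1 : (⌈(2 + 2*C)/θ₁⌉₊ + 1 : ℕ) ≤ l := le_trans (le_trans (le_max_right _ _)
          (le_of_eq hk₁def.symm)) hl
        have h2 : ((2 + 2*C)/θ₁) ≤ (l:ℝ) := by
          calc (2 + 2*C)/θ₁ ≤ ⌈(2 + 2*C)/θ₁⌉₊ := Nat.le_ceil _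
            _ ≤ (l:ℝ) := by exact_mod_cast Nat.le_of_succ_le h1
        rw [div_le_iff₀ hθ₁] at h2
        linarith
      have hδl : δ l * l ≤ 1 := by
        have h0 : δ l = 1 / ((l:ℝ) + 1) := rfl
        rw [h0, div_mul_eq_mul_div, one_mul, div_le_one (by positivity : (0:ℝ) < (l:ℝ)+1)]
        linarith
      have hγn : (γ l : ℝ) * l ≤ n l := by
        have h3 := hn1 l
        have h4 : l * γ l ≤ n l := by omega
        have h5 : ((l * γ l : ℕ) : ℝ) ≤ (n l : ℝ) := by exact_mod_cast h4
        push_cast at h5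
        linarith
      have hck : (c l : ℝ) = (n l : ℝ) + (γ l : ℝ) := by
        have : c l = n l + γ l := rfl
        rw [this]; push_cast; ring
      -- multiply through by l
      have hnl0 : (0:ℝ) ≤ n l := Nat.cast_nonneg _
      have hγl0 : (0:ℝ) ≤ γ l := Nat.cast_nonneg _
      have key : ((n l : ℝ) * (2 * δ l) + (γ l : ℝ) * (2 * C)) * l ≤ (θ₁ * c l) * l := by
        have e1 : (n l : ℝ) * (2 * δ l) * l = 2 * (n l : ℝ) * (δ l * l) := by ring
        have e2 : 2 * (n l : ℝ) * (δ l * l) ≤ 2 * (n l : ℝ) := by nlinarith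
        have e3 : (γ l : ℝ) * (2 * C) * l = 2 * C * ((γ l : ℝ) * l) := by ring
        have e4 : 2 * C * ((γ l : ℝ) * l) ≤ 2 * C * (n l : ℝ) :=
          mul_le_mul_of_nonneg_left hγn (by positivity)
        have e5 : 2 * (n l : ℝ) + 2 * C * (n l : ℝ) = (2 + 2*C) * (n l : ℝ) := by ring
        have e6 : (2 + 2*C) * (n l : ℝ) ≤ (θ₁ * l) * (n l : ℝ) :=
          mul_le_mul_of_nonneg_right hlc hnl0
        have e7 : (θ₁ * l) * (n l : ℝ) ≤ (θ₁ * c l) * l := by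
          rw [hck]; nlinarith
        nlinarith [e2, e4, e6, e7]
      exact le_of_mul_le_mul_right key hl0
    -- bound at stage boundaries
    have hsumL : ∀ K, k₁ ≤ K → (L k₁ : ℝ) + ∑ l ∈ Finset.Ico k₁ K, ((R l * c l : ℕ) : ℝ) = L K := by
      intro K hK
      induction K, hK using Nat.le_induction with
      | base => simp
      | succ K hK ih =>
        rw [Finset.sum_Ico_succ_top hK, hLsucc]
        push_cast at ih ⊢
        linarith
    have hLbound : ∀ K, k₁ ≤ K → |Sx j (L K) - (L K : ℝ) * α j|
        ≤ |Sx j (L k₁) - (L k₁ : ℝ) * α j| + θ₁ * L K := by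
      intro K hK
      have h1 := hcum k₁ K hk₁j hK
      have h2 : ∑ l ∈ Finset.Ico k₁ K, (R l : ℝ) * ((n l : ℝ) * (2 * δ l) + (γ l : ℝ) * (2 * C))
          ≤ ∑ l ∈ Finset.Ico k₁ K, (R l : ℝ) * (θ₁ * c l) := by
        refine Finset.sum_le_sum fun l hl => ?_
        rw [Finset.mem_Ico] at hl
        exact mul_le_mul_of_nonneg_left (herr l hl.1) (Nat.cast_nonneg _)
      have h3 : ∑ l ∈ Finset.Ico k₁ K, (R l : ℝ) * (θ₁ * c l)
          = θ₁ * ∑ l ∈ Finset.Ico k₁ K, ((R l * c l : ℕ) : ℝ) := by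
        rw [Finset.mul_sum]
        refine Finset.sum_congr rfl fun l _ => ?_
        push_cast; ring
      have h4 := hsumL K hK
      have h5 : (0:ℝ) ≤ L k₁ := Nat.cast_nonneg _
      have h6 : θ₁ * ∑ l ∈ Finset.Ico k₁ K, ((R l * c l : ℕ) : ℝ) ≤ θ₁ * L K := by
        refine mul_le_mul_of_nonneg_left ?_ hθ₁.le
        linarith
      linarith
    -- bound for arbitrary times
    have hgen : ∀ K, k₁ ≤ K → ∀ nn, L K ≤ nn → nn ≤ L (K+1) →
        |Sx j nn - (nn : ℝ) * α j| ≤ |Sx j (L k₁) - (L k₁ : ℝ) * α j|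
          + 2 * θ₁ * nn + (c K : ℝ) * (2*C) := by
      intro K hK nn h1 h2
      set r : ℕ := (nn - L K) / c K with hrdef
      set s : ℕ := (nn - L K) % c K with hsdef
      have hdm : c K * r + s = nn - L K := Nat.div_add_mod _ _
      have hdm2 : (L K + r * c K) + s = nn := by
        have h3 : r * c K = c K * r := Nat.mul_comm _ _
        omega
      have hrR : r ≤ R K := by
        have h3 : nn - L K ≤ R K * c K := by
          have := hLsucc K; omega
        have h4 : (nn - L K) / c K ≤ (R K * c K) / c K := Nat.div_le_div_right h3
        rwa [Nat.mul_div_cancel _ (hc0 K)] at h4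
      have hsc : s < c K := Nat.mod_lt _ (hc0 K)
      have h4 := hstage K (le_trans hk₁j hK) r hrR
      have h5 := hDstep (L K + r * c K) s
      rw [hdm2] at h5
      have h7 := hLbound K hK
      have h8 : (r : ℝ) * ((n K : ℝ) * (2 * δ K) + (γ K : ℝ) * (2 * C)) ≤ θ₁ * nn := by
        have e1 : (r : ℝ) * ((n K : ℝ) * (2 * δ K) + (γ K : ℝ) * (2 * C))
            ≤ (r : ℝ) * (θ₁ * c K) :=
          mul_le_mul_of_nonneg_left (herr K hK) (Nat.cast_nonneg _)
        have e2 : r * c K ≤ nn := by omega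
        have e3 : ((r * c K : ℕ) : ℝ) ≤ (nn : ℝ) := by exact_mod_cast e2
        push_cast at e3
        nlinarith [hθ₁.le]
      have h9 : (s:ℝ) * (2*C) ≤ (c K : ℝ) * (2*C) := by
        have : (s:ℝ) ≤ c K := by exact_mod_cast hsc.le
        nlinarith [hC0.le]
      have h10 : θ₁ * (L K : ℝ) ≤ θ₁ * nn := by
        have : (L K : ℝ) ≤ nn := by exact_mod_cast h1
        exact mul_le_mul_of_nonneg_left this hθ₁.le
      linarith [h4, h5, h7, h8, h9, h10]
    -- choose thresholds
    set k₂ : ℕ := max k₁ ⌈2*C/θ₁⌉₊ with hk₂def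
    have hk₂1 : k₁ ≤ k₂ := le_max_left _ _
    have h2C : 2*C ≤ θ₁ * (k₂ + 1) := by
      have h1 : (⌈2*C/θ₁⌉₊ : ℝ) ≤ k₂ := by exact_mod_cast le_max_right k₁ ⌈2*C/θ₁⌉₊
      have h2 : 2*C/θ₁ ≤ (k₂ : ℝ) := (Nat.le_ceil _).trans h1
      rw [div_le_iff₀ hθ₁] at h2
      nlinarith
    set A : ℝ := |Sx j (L k₁) - (L k₁ : ℝ) * α j| with hAdef
    refine ⟨max (L k₂) (⌈A/θ₁⌉₊ + 1), fun nn hnn => ?_⟩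
    have hnnL : L k₂ ≤ nn := le_trans (le_max_left _ _) hnn
    have hnnA : (⌈A/θ₁⌉₊ + 1 : ℕ) ≤ nn := le_trans (le_max_right _ _) hnn
    have hAnn : A ≤ θ₁ * nn := by
      have h1 : A/θ₁ ≤ (nn : ℝ) := by
        calc A/θ₁ ≤ ⌈A/θ₁⌉₊ := Nat.le_ceil _
          _ ≤ (nn:ℝ) := by exact_mod_cast Nat.le_of_succ_le hnnA
      rw [div_le_iff₀ hθ₁] at h1
      linarith
    set K : ℕ := Nat.findGreatest (fun K => L K ≤ nn) nn with hKdef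
    have hk₂nn : k₂ ≤ nn := le_trans (hLgt k₂).le hnnL
    have hKspec : L K ≤ nn :=
      Nat.findGreatest_spec (P := fun K' => L K' ≤ nn) hk₂nn hnnL
    have hK2 : k₂ ≤ K :=
      Nat.le_findGreatest (P := fun K' => L K' ≤ nn) hk₂nn hnnL
    have hKup : nn < L (K+1) := by
      by_cases h : K + 1 ≤ nn
      · have h2 : ¬ (L (K+1) ≤ nn) :=
          Nat.findGreatest_is_greatest (P := fun K' => L K' ≤ nn)
            (Nat.lt_succ_self K) h
        omega
      · have h1 := hLgt (K+1)
        omega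
    have hK1 : k₁ ≤ K := le_trans hk₂1 hK2
    have hmain := hgen K hK1 nn hKspec hKup.le
    have hcK : (c K : ℝ) * (2*C) ≤ θ₁ * nn := by
      have h1 : (K + 1) * c K ≤ L K := hLc K (le_trans hk₁1 hK1)
      have h2 : ((K:ℝ) + 1) * c K ≤ L K := by exact_mod_cast h1
      have h3 : (L K : ℝ) ≤ nn := by exact_mod_cast hKspec
      have h4 : θ₁ * (k₂ + 1) ≤ θ₁ * (K + 1) := by
        have : ((k₂:ℝ) + 1) ≤ (K:ℝ) + 1 := by
          have : (k₂:ℝ) ≤ K := by exact_mod_cast hK2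
          linarith
        exact mul_le_mul_of_nonneg_left this hθ₁.le
      have h5 : 2*C ≤ θ₁ * (K+1) := le_trans h2C h4
      have h6 : (0:ℝ) ≤ c K := Nat.cast_nonneg _
      have h7 : (c K : ℝ) * (2*C) ≤ (c K : ℝ) * (θ₁ * (K+1)) :=
        mul_le_mul_of_nonneg_left h5 h6
      have h8 : (c K : ℝ) * (θ₁ * (K+1)) = θ₁ * (((K:ℝ)+1) * c K) := by ring
      rw [h8] at h7
      refine h7.trans ?_
      refine mul_le_mul_of_nonneg_left (h2.trans h3) hθ₁.le
    have hfin : |Sx j nn - (nn:ℝ) * α j| ≤ 4 * θ₁ * nn := by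
      linarith [hmain, hAnn, hcK]
    calc |Sx j nn - (nn:ℝ) * α j| ≤ 4 * θ₁ * nn := hfin
      _ = nn * θ := by rw [hθ₁def]; ring
  -- assemble: the point x is generic
  refine ⟨x, ?_⟩
  intro φ hφ
  rw [Metric.tendsto_atTop]
  intro θ hθ
  set φC : C(X, ℝ) := ⟨φ, hφ⟩ with hφCdef
  obtain ⟨j, hj⟩ := Metric.denseRange_iff.mp hψ φC (θ/4) (by positivity)
  obtain ⟨N₀, hN₀⟩ := hcore j (θ/4) (by positivity)
  refine ⟨max N₀ 1, fun nn hnn => ?_⟩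
  have hnn1 : 1 ≤ nn := le_trans (le_max_right _ _) hnn
  have hnn0 : (0:ℝ) < nn := by exact_mod_cast hnn1
  have h1 := hN₀ nn (le_trans (le_max_left _ _) hnn)
  have h2 : |birkhoffSum f φ nn x - Sx j nn| ≤ nn * (θ/4) := by
    have hSx : Sx j nn = ∑ p ∈ Finset.range nn, ψ j (f^[p] x) := rfl
    have hbS : birkhoffSum f φ nn x = ∑ p ∈ Finset.range nn, φ (f^[p] x) := rfl
    rw [hSx, hbS, ← Finset.sum_sub_distrib]
    refine (Finset.abs_sum_le_sum_abs _ _).trans ?_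
    have hb : ∀ p ∈ Finset.range nn, |φ (f^[p] x) - ψ j (f^[p] x)| ≤ θ/4 := by
      intro p _
      have hd : dist (φC (f^[p] x)) (ψ j (f^[p] x)) ≤ dist φC (ψ j) :=
        ContinuousMap.dist_apply_le_dist _
      have : dist (φC (f^[p] x)) (ψ j (f^[p] x)) = |φ (f^[p] x) - ψ j (f^[p] x)| :=
        Real.dist_eq _ _
      rw [this] at hd
      linarith [hj]
    refine (Finset.sum_le_sum hb).trans ?_
    rw [Finset.sum_const, Finset.card_range, nsmul_eq_mul]
  have hψint : Integrable (fun u => ψ j u) μ :=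
    (ψ j).continuous.integrable_of_hasCompactSupport ((isClosed_tsupport _).isCompact)
  have hφint : Integrable φ μ :=
    hφ.integrable_of_hasCompactSupport ((isClosed_tsupport _).isCompact)
  have h3 : |α j - ∫ u, φ u ∂μ| ≤ θ/4 := by
    have hsub : α j - ∫ u, φ u ∂μ = ∫ u, (ψ j u - φ u) ∂μ := by
      rw [MeasureTheory.integral_sub hψint hφint]
    rw [hsub, ← Real.norm_eq_abs]
    refine (MeasureTheory.norm_integral_le_of_norm_le_const (C := θ/4)
      (Eventually.of_forall fun u => ?_)).trans ?_
    · have hd : dist (ψ j u) (φC u) ≤ dist (ψ j) φC := ContinuousMap.dist_apply_le_dist _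
      rw [Real.norm_eq_abs, ← Real.dist_eq]
      calc dist (ψ j u) (φC u) ≤ dist (ψ j) φC := hd
        _ = dist φC (ψ j) := dist_comm _ _
        _ ≤ θ/4 := hj.le
    · simp [measure_univ]
  rw [Real.dist_eq]
  have expand : birkhoffSum f φ nn x / nn - ∫ u, φ u ∂μ
      = ((birkhoffSum f φ nn x - Sx j nn) + (Sx j nn - nn * α j)) / nn
        + (α j - ∫ u, φ u ∂μ) := by
    field_simp
    ring
  rw [expand]
  have hstep1 : |((birkhoffSum f φ nn x - Sx j nn) + (Sx j nn - nn * α j)) / (nn:ℝ)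
      + (α j - ∫ u, φ u ∂μ)|
      ≤ (|birkhoffSum f φ nn x - Sx j nn| + |Sx j nn - nn * α j|) / nn
        + |α j - ∫ u, φ u ∂μ| := by
    refine (abs_add_le _ _).trans (add_le_add ?_ le_rfl)
    rw [abs_div, abs_of_pos hnn0]
    gcongr
    exact abs_add_le _ _
  refine lt_of_le_of_lt (hstep1.trans ?_) (show 3*(θ/4) < θ by linarith)
  have hdiv : ((nn:ℝ) * (θ/4) + nn * (θ/4)) / nn = 2*(θ/4) := by
    field_simp
    ring
  calc (|birkhoffSum f φ nn x - Sx j nn| + |Sx j nn - nn * α j|) / nn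
      + |α j - ∫ u, φ u ∂μ|
      ≤ ((nn:ℝ) * (θ/4) + nn * (θ/4)) / nn + θ/4 := by
        gcongr
      _ = 2*(θ/4) + θ/4 := by rw [hdiv]
      _ = 3*(θ/4) := by ring
end

section
/- (Generalised pressure distribution principle.) Let (X,d) be a compact metric space, f : X → X continuous, ψ : X → ℝ continuous, and Z ⊂ X an arbitrary Borel set. Suppose there exist ε > 0 and s ≥ 0 such that one can find a sequence of Borel probability measures μ_k on X, a constant K > 0, and a weak* limit measure ν of the sequence (μ_k) with ν(Z) > 0, satisfying limsup_{k→∞} μ_k(B_n(x,ε)) ≤ K exp(−ns + S_nψ(x)) for all sufficiently large n and every Bowen ball B_n(x,ε) with B_n(x,ε) ∩ Z ≠ ∅. Then P_Z(ψ,ε) ≥ s. -/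
open MeasureTheory Filter Topology Set
open scoped ENNReal NNReal

section PDPAux

variable {X : Type*} [MetricSpace X]

lemma mem_bowenBall_self {f : X → X} {ε : ℝ} (hε : 0 < ε) (n : ℕ) (x : X) :
    x ∈ bowenBall f ε n x := fun i _ => by simp [hε]

lemma isOpen_bowenBall {f : X → X} (hf : Continuous f) (ε : ℝ) (n : ℕ) (x : X) :
    IsOpen (bowenBall f ε n x) := by
  have h : bowenBall f ε n x = ⋂ i ∈ Finset.range n, {y | dist (f^[i] x) (f^[i] y) < ε} := by
    ext y; simp [bowenBall]
  rw [h]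
  refine isOpen_biInter_finset fun i _ => ?_
  exact isOpen_lt (continuous_const.dist (hf.iterate i)) continuous_const

lemma birkhoffSum_le_of_le {f : X → X} {ψ : X → ℝ} {R : ℝ} (hR : ∀ x, ψ x ≤ R) (n : ℕ)
    (y : X) : birkhoffSum f ψ n y ≤ n * R := by
  calc birkhoffSum f ψ n y ≤ ∑ _i ∈ Finset.range n, R :=
        Finset.sum_le_sum fun i _ => hR _
    _ = n * R := by simp

lemma ballSup_le_of_le {f : X → X} {ψ : X → ℝ} {R : ℝ} (hR : ∀ x, ψ x ≤ R) (hR0 : 0 ≤ R)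
    (ε : ℝ) (n : ℕ) (x : X) : ballSup f ψ ε n x ≤ n * R := by
  apply Real.sSup_le
  · rintro r ⟨y, -, rfl⟩; exact birkhoffSum_le_of_le hR n y
  · positivity

lemma le_ballSup {f : X → X} {ψ : X → ℝ} {R : ℝ} (hR : ∀ x, ψ x ≤ R) {ε : ℝ} (hε : 0 < ε)
    (n : ℕ) (x : X) : birkhoffSum f ψ n x ≤ ballSup f ψ ε n x := by
  apply le_csSup
  · exact ⟨n * R, by rintro r ⟨y, -, rfl⟩; exact birkhoffSum_le_of_le hR n y⟩
  · exact ⟨x, mem_bowenBall_self hε n x, rfl⟩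

lemma ennreal_limsup_le_ofReal {u : ℕ → ℝ≥0∞} {c : ℝ} (hu : ∀ k, u k ≤ 1)
    (h : atTop.limsup (fun k => (u k).toReal) ≤ c) :
    atTop.limsup u ≤ ENNReal.ofReal c := by
  refine ENNReal.le_of_forall_pos_le_add fun δ hδ _ => ?_
  have hb : IsBoundedUnder (· ≤ ·) atTop fun k => (u k).toReal :=
    isBoundedUnder_of ⟨1, fun k => by
      simpa using ENNReal.toReal_mono ENNReal.one_ne_top (hu k)⟩
  have hδ' : (0:ℝ) < (δ:ℝ) := hδ
  have hev : ∀ᶠ k in atTop, (u k).toReal < c + δ :=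
    eventually_lt_of_limsup_lt (lt_of_le_of_lt h (by linarith)) hb
  have hev2 : ∀ᶠ k in atTop, u k ≤ ENNReal.ofReal c + δ := by
    filter_upwards [hev] with k hk
    have hne : u k ≠ ∞ := ((hu k).trans_lt ENNReal.one_lt_top).ne
    calc u k = ENNReal.ofReal (u k).toReal := (ENNReal.ofReal_toReal hne).symm
      _ ≤ ENNReal.ofReal (c + δ) := ENNReal.ofReal_le_ofReal hk.le
      _ ≤ ENNReal.ofReal c + ENNReal.ofReal δ := ENNReal.ofReal_add_le
      _ = ENNReal.ofReal c + δ := by rw [ENNReal.ofReal_coe_nnreal]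
  exact limsup_le_of_le (by isBoundedDefault) hev2

lemma ennreal_limsup_subseq_le {u : ℕ → ℝ≥0∞} {ι : ℕ → ℕ} (hι : StrictMono ι) :
    atTop.limsup (fun k => u (ι k)) ≤ atTop.limsup u := by
  have h1 : (fun k => u (ι k)) = u ∘ ι := rfl
  rw [h1, limsup_comp]
  exact limsup_le_limsup_of_le hι.tendsto_atTop

lemma pressureM_le_coverSum (f : X → X) (ψ : X → ℝ) (Z : Set X) (α ε : ℝ) (N : ℕ)
    {Γ : Set (X × ℕ)} (hc : Γ.Countable) (hN : ∀ p ∈ Γ, N ≤ p.2)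
    (hcov : Z ⊆ ⋃ p ∈ Γ, bowenBall f ε p.2 p.1) :
    pressureM f ψ Z α ε N ≤ coverSum f ψ ε α Γ :=
  iInf_le_of_le Γ (iInf_le_of_le hc (iInf_le_of_le hN (iInf_le_of_le hcov le_rfl)))

lemma exists_pressureOuter_eq_zero [CompactSpace X]
    (f : X → X) (hf : Continuous f) (ψ : X → ℝ) (hψ : Continuous ψ) (Z : Set X)
    {ε : ℝ} (hε : 0 < ε) : ∃ α : ℝ, pressureOuter f ψ Z α ε = 0 := by
  classical
  rcases isEmpty_or_nonempty X with hX | hX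
  · refine ⟨0, ?_⟩
    have hM : ∀ N, pressureM f ψ Z 0 ε N = 0 := by
      intro N
      have h0 : coverSum f ψ ε 0 (∅ : Set (X × ℕ)) = 0 := by
        simp [coverSum, tsum_empty]
      have hZe : Z = ∅ := Set.eq_empty_of_isEmpty Z
      have := pressureM_le_coverSum f ψ Z 0 ε N countable_empty (by simp)
        (by rw [hZe]; exact empty_subset _)
      rw [h0] at this
      exact le_antisymm this zero_le
    simp [pressureOuter, hM]
  · obtain ⟨R', hR'⟩ := (isCompact_range hψ).bddAbove
    set R : ℝ := max R' 0 with hRdef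
    have hRb : ∀ x, ψ x ≤ R := fun x => le_trans (hR' (Set.mem_range_self x)) (le_max_left _ _)
    have hR0 : (0:ℝ) ≤ R := le_max_right _ _
    obtain ⟨t, ht⟩ := isCompact_univ.elim_finite_subcover
      (fun z : X => Metric.ball z (ε/2)) (fun z => Metric.isOpen_ball)
      (fun x _ => Set.mem_iUnion.2 ⟨x, Metric.mem_ball_self (by linarith)⟩)
    have htne : t.Nonempty := by
      have := ht (Set.mem_univ hX.some)
      simp only [Set.mem_iUnion] at this
      obtain ⟨z, hz, -⟩ := this
      exact ⟨z, hz⟩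
    have hCpos : (0:ℝ) < t.card := by exact_mod_cast htne.card_pos
    set α : ℝ := R + Real.log t.card + 1 with hαdef
    -- For each n, construct a cover of X by at most (t.card)^n Bowen balls of length n.
    have hcov : ∀ n : ℕ, ∃ Γ : Finset (X × ℕ), (∀ p ∈ Γ, p.2 = n) ∧
        (Z ⊆ ⋃ p ∈ (Γ : Set (X × ℕ)), bowenBall f ε p.2 p.1) ∧
        coverSum f ψ ε α (Γ : Set (X × ℕ)) ≤
          ENNReal.ofReal (((t.card : ℝ) ^ n) * Real.exp ((n:ℝ) * (R - α))) := by
      intro n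
      set J := (Fin n → {z // z ∈ t}) with hJ
      set A : J → Set X :=
        fun g => {x | ∀ i : Fin n, f^[(i:ℕ)] x ∈ Metric.ball (g i : X) (ε/2)} with hA
      have hAcov : ∀ x : X, ∃ g : J, x ∈ A g := by
        intro x
        have hi : ∀ i : Fin n, ∃ z : {z // z ∈ t},
            f^[(i:ℕ)] x ∈ Metric.ball (z : X) (ε/2) := by
          intro i
          have := ht (Set.mem_univ (f^[(i:ℕ)] x))
          simp only [Set.mem_iUnion] at this
          obtain ⟨z, hz, hmem⟩ := this
          exact ⟨⟨z, hz⟩, hmem⟩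
        exact ⟨fun i => (hi i).choose, fun i => (hi i).choose_spec⟩
      set h : J → X := fun g => if hg : (A g).Nonempty then hg.choose else hX.some with hh
      have hball : ∀ (g : J) (x : X), x ∈ A g → x ∈ bowenBall f ε n (h g) := by
        intro g x hx
        have hgne : (A g).Nonempty := ⟨x, hx⟩
        have hg : h g ∈ A g := by rw [hh]; simp only [dif_pos hgne]; exact hgne.choose_spec
        intro i hi
        have h1 : dist (f^[i] (h g)) ((g ⟨i, hi⟩ : X)) < ε/2 := hg ⟨i, hi⟩
        have h2 : dist (f^[i] x) ((g ⟨i, hi⟩ : X)) < ε/2 := hx ⟨i, hi⟩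
        calc dist (f^[i] (h g)) (f^[i] x)
            ≤ dist (f^[i] (h g)) ((g ⟨i, hi⟩ : X)) + dist (f^[i] x) ((g ⟨i, hi⟩ : X)) :=
              dist_triangle_right _ _ _
          _ < ε := by linarith
      refine ⟨Finset.image (fun g : J => (h g, n)) Finset.univ, ?_, ?_, ?_⟩
      · intro p hp
        obtain ⟨g, -, rfl⟩ := Finset.mem_image.1 hp
        rfl
      · intro z _
        obtain ⟨g, hg⟩ := hAcov z
        refine Set.mem_iUnion₂.2 ⟨(h g, n), ?_, hball g z hg⟩
        exact Finset.mem_image.2 ⟨g, Finset.mem_univ _, rfl⟩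
      · set Γ := Finset.image (fun g : J => (h g, n)) Finset.univ with hΓ
        have hterm : ∀ p ∈ Γ,
            ENNReal.ofReal (Real.exp (-α * (p.2 : ℝ) + ballSup f ψ ε p.2 p.1)) ≤
              ENNReal.ofReal (Real.exp ((n:ℝ) * (R - α))) := by
          intro p hp
          obtain ⟨g, -, rfl⟩ := Finset.mem_image.1 hp
          apply ENNReal.ofReal_le_ofReal
          apply Real.exp_le_exp.2
          have hbs := ballSup_le_of_le (f := f) hRb hR0 ε n (h g)
          have : (-α) * (n : ℝ) + ballSup f ψ ε n (h g) ≤ (n:ℝ) * (R - α) := by nlinarith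
          simpa using this
        have hcount : (Γ.card : ℝ≥0∞) ≤ ((t.card ^ n : ℕ) : ℝ≥0∞) := by
          have h1 : Γ.card ≤ Fintype.card J := by
            refine le_trans (Finset.card_image_le) (le_of_eq (Finset.card_univ))
          have h2 : Fintype.card J = t.card ^ n := by
            show Fintype.card (Fin n → {z // z ∈ t}) = t.card ^ n
            simp [Fintype.card_fun]
          exact_mod_cast h1.trans_eq h2
        have hsum : coverSum f ψ ε α (Γ : Set (X × ℕ)) ≤
            (Γ.card : ℝ≥0∞) * ENNReal.ofReal (Real.exp ((n:ℝ) * (R - α))) := by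
          have hts : coverSum f ψ ε α (Γ : Set (X × ℕ)) =
              ∑ p ∈ Γ, ENNReal.ofReal (Real.exp (-α * (p.2 : ℝ) + ballSup f ψ ε p.2 p.1)) :=
            Finset.tsum_subtype' Γ
              (fun q => ENNReal.ofReal (Real.exp (-α * (q.2 : ℝ) + ballSup f ψ ε q.2 q.1)))
          rw [hts]
          calc ∑ p ∈ Γ, ENNReal.ofReal (Real.exp (-α * (p.2 : ℝ) + ballSup f ψ ε p.2 p.1))
              ≤ ∑ _p ∈ Γ, ENNReal.ofReal (Real.exp ((n:ℝ) * (R - α))) :=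
                Finset.sum_le_sum hterm
            _ = (Γ.card : ℝ≥0∞) * ENNReal.ofReal (Real.exp ((n:ℝ) * (R - α))) := by
                rw [Finset.sum_const, nsmul_eq_mul]
        refine hsum.trans ?_
        calc (Γ.card : ℝ≥0∞) * ENNReal.ofReal (Real.exp ((n:ℝ) * (R - α)))
            ≤ ((t.card ^ n : ℕ) : ℝ≥0∞) * ENNReal.ofReal (Real.exp ((n:ℝ) * (R - α))) :=
              mul_le_mul_left hcount _
          _ = ENNReal.ofReal (((t.card : ℝ) ^ n) * Real.exp ((n:ℝ) * (R - α))) := by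
              have hcast : ((t.card ^ n : ℕ) : ℝ≥0∞) = ENNReal.ofReal ((t.card : ℝ) ^ n) := by
                rw [← ENNReal.ofReal_natCast (t.card ^ n)]
                norm_num
              rw [hcast, ← ENNReal.ofReal_mul (by positivity)]
    -- Each pressureM vanishes at α.
    have hMle : ∀ N n : ℕ, N ≤ n →
        pressureM f ψ Z α ε N ≤ ENNReal.ofReal (Real.exp (-(n:ℝ))) := by
      intro N n hn
      obtain ⟨Γ, hΓn, hΓcov, hΓsum⟩ := hcov n
      have h1 := pressureM_le_coverSum f ψ Z α ε N (Γ.countable_toSet)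
        (fun p hp => (hΓn p hp) ▸ hn) hΓcov
      refine h1.trans (hΓsum.trans ?_)
      apply le_of_eq
      congr 1
      have hpow : (t.card : ℝ) ^ n = Real.exp ((n:ℝ) * Real.log t.card) := by
        rw [Real.exp_nat_mul, Real.exp_log hCpos]
      rw [hpow, ← Real.exp_add]
      congr 1
      rw [hαdef]
      ring
    have hM0 : ∀ N, pressureM f ψ Z α ε N = 0 := by
      intro N
      refine le_antisymm (ENNReal.le_of_forall_pos_le_add fun δ hδ _ => ?_) zero_le
      rw [zero_add]
      set n : ℕ := max N (Nat.ceil (-Real.log (δ:ℝ))) with hn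
      refine (hMle N n (le_max_left _ _)).trans ?_
      have hδ' : (0:ℝ) < (δ:ℝ) := hδ
      have h2 : -Real.log (δ:ℝ) ≤ (n:ℝ) := by
        refine le_trans (Nat.le_ceil _) ?_
        exact_mod_cast le_max_right N (Nat.ceil (-Real.log (δ:ℝ)))
      have h3 : Real.exp (-(n:ℝ)) ≤ (δ:ℝ) := by
        calc Real.exp (-(n:ℝ)) ≤ Real.exp (Real.log (δ:ℝ)) :=
              Real.exp_le_exp.2 (by linarith)
          _ = (δ:ℝ) := Real.exp_log hδ'
      calc ENNReal.ofReal (Real.exp (-(n:ℝ))) ≤ ENNReal.ofReal (δ:ℝ) :=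
            ENNReal.ofReal_le_ofReal h3
        _ = (δ : ℝ≥0∞) := ENNReal.ofReal_coe_nnreal
    exact ⟨α, by simp [pressureOuter, hM0]⟩

end PDPAux

/-- **Generalised pressure distribution principle.** -/
theorem pressure_distribution_principle
    {X : Type*} [MetricSpace X] [CompactSpace X] [MeasurableSpace X] [BorelSpace X]
    (f : X → X) (hf : Continuous f) (ψ : X → ℝ) (hψ : Continuous ψ)
    (Z : Set X) (hZ : MeasurableSet Z) (ε s : ℝ) (hε : 0 < ε) (hs : 0 ≤ s)
    (μ : ℕ → ProbabilityMeasure X) (K : ℝ) (hK : 0 < K)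
    (ν : ProbabilityMeasure X)
    (hlim : ∃ ι : ℕ → ℕ, StrictMono ι ∧ Tendsto (fun k => μ (ι k)) atTop (𝓝 ν))
    (hνZ : 0 < (ν : Measure X) Z)
    (hball : ∃ N : ℕ, ∀ n ≥ N, ∀ x : X, (bowenBall f ε n x ∩ Z).Nonempty →
      atTop.limsup (fun k : ℕ => ((μ k : Measure X) (bowenBall f ε n x)).toReal) ≤
        K * Real.exp (-(n : ℝ) * s + birkhoffSum f ψ n x)) :
    s ≤ pressureEps f ψ Z ε := by
  classical
  obtain ⟨N0, hN0⟩ := hball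
  obtain ⟨ι, hι, hιlim⟩ := hlim
  obtain ⟨R', hR'⟩ := (isCompact_range hψ).bddAbove
  set R : ℝ := max R' 0 with hRdef
  have hRb : ∀ x, ψ x ≤ R := fun x => le_trans (hR' (Set.mem_range_self x)) (le_max_left _ _)
  have hSne : {α : ℝ | pressureOuter f ψ Z α ε = 0}.Nonempty :=
    exists_pressureOuter_eq_zero f hf ψ hψ Z hε
  refine le_csInf hSne fun α hα => ?_
  by_contra hcon
  push_neg at hcon
  have hα' : ∀ N, pressureM f ψ Z α ε N = 0 := by
    simpa only [Set.mem_setOf_eq, pressureOuter, ENNReal.iSup_eq_zero] using hα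
  have key : ∀ η : ℝ≥0∞, 0 < η → (ν : Measure X) Z ≤ ENNReal.ofReal K * η := by
    intro η hη
    have hlt : pressureM f ψ Z α ε N0 < η := by rw [hα' N0]; exact hη
    rw [pressureM, iInf_lt_iff] at hlt
    obtain ⟨Γ, hlt⟩ := hlt
    rw [iInf_lt_iff] at hlt
    obtain ⟨hΓc, hlt⟩ := hlt
    rw [iInf_lt_iff] at hlt
    obtain ⟨hΓN, hlt⟩ := hlt
    rw [iInf_lt_iff] at hlt
    obtain ⟨hΓcov, hlt⟩ := hlt
    set Γ' : Set (X × ℕ) := {p ∈ Γ | (bowenBall f ε p.2 p.1 ∩ Z).Nonempty} with hΓ'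
    have hΓ'c : Γ'.Countable := hΓc.mono (Set.sep_subset _ _)
    have hcov' : Z ⊆ ⋃ p ∈ Γ', bowenBall f ε p.2 p.1 := by
      intro z hz
      obtain ⟨p, hp, hzp⟩ := Set.mem_iUnion₂.1 (hΓcov hz)
      exact Set.mem_iUnion₂.2 ⟨p, ⟨hp, ⟨z, hzp, hz⟩⟩, hzp⟩
    have hterm : ∀ p : X × ℕ, p ∈ Γ' → (ν : Measure X) (bowenBall f ε p.2 p.1) ≤
        ENNReal.ofReal K *
          ENNReal.ofReal (Real.exp (-α * (p.2 : ℝ) + ballSup f ψ ε p.2 p.1)) := by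
      rintro p ⟨hpΓ, hpne⟩
      have hn : N0 ≤ p.2 := hΓN p hpΓ
      have h1 : (ν : Measure X) (bowenBall f ε p.2 p.1) ≤
          atTop.liminf (fun k => (μ (ι k) : Measure X) (bowenBall f ε p.2 p.1)) :=
        ProbabilityMeasure.le_liminf_measure_open_of_tendsto hιlim
          (isOpen_bowenBall hf ε p.2 p.1)
      have h2 : atTop.liminf (fun k => (μ (ι k) : Measure X) (bowenBall f ε p.2 p.1)) ≤
          atTop.limsup (fun k => (μ (ι k) : Measure X) (bowenBall f ε p.2 p.1)) :=
        liminf_le_limsup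
      have h3 : atTop.limsup (fun k => (μ (ι k) : Measure X) (bowenBall f ε p.2 p.1)) ≤
          atTop.limsup (fun k => (μ k : Measure X) (bowenBall f ε p.2 p.1)) :=
        ennreal_limsup_subseq_le hι
      have h5 : atTop.limsup (fun k => (μ k : Measure X) (bowenBall f ε p.2 p.1)) ≤
          ENNReal.ofReal (K * Real.exp (-(p.2:ℝ) * s + birkhoffSum f ψ p.2 p.1)) :=
        ennreal_limsup_le_ofReal (fun k => prob_le_one) (hN0 p.2 hn p.1 hpne)
      have hexp : K * Real.exp (-(p.2:ℝ) * s + birkhoffSum f ψ p.2 p.1) ≤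
          K * Real.exp (-α * (p.2 : ℝ) + ballSup f ψ ε p.2 p.1) := by
        refine mul_le_mul_of_nonneg_left (Real.exp_le_exp.2 ?_) hK.le
        have hbs := le_ballSup (f := f) hRb hε p.2 p.1
        have hnn : (0:ℝ) ≤ (p.2 : ℝ) := Nat.cast_nonneg _
        nlinarith [hcon.le]
      calc (ν : Measure X) (bowenBall f ε p.2 p.1)
          ≤ atTop.limsup (fun k => (μ k : Measure X) (bowenBall f ε p.2 p.1)) :=
            h1.trans (h2.trans h3)
        _ ≤ ENNReal.ofReal (K * Real.exp (-(p.2:ℝ) * s + birkhoffSum f ψ p.2 p.1)) := h5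
        _ ≤ ENNReal.ofReal (K * Real.exp (-α * (p.2 : ℝ) + ballSup f ψ ε p.2 p.1)) :=
            ENNReal.ofReal_le_ofReal hexp
        _ = ENNReal.ofReal K *
            ENNReal.ofReal (Real.exp (-α * (p.2 : ℝ) + ballSup f ψ ε p.2 p.1)) :=
            ENNReal.ofReal_mul hK.le
    calc (ν : Measure X) Z
        ≤ (ν : Measure X) (⋃ p ∈ Γ', bowenBall f ε p.2 p.1) := measure_mono hcov'
      _ ≤ ∑' p : Γ', (ν : Measure X) (bowenBall f ε (p : X × ℕ).2 (p : X × ℕ).1) :=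
          measure_biUnion_le _ hΓ'c _
      _ ≤ ∑' p : Γ', ENNReal.ofReal K *
            ENNReal.ofReal (Real.exp (-α * ((p : X × ℕ).2 : ℝ) +
              ballSup f ψ ε (p : X × ℕ).2 (p : X × ℕ).1)) :=
          ENNReal.tsum_le_tsum fun p => hterm p p.2
      _ = ENNReal.ofReal K * coverSum f ψ ε α Γ' := by
          rw [ENNReal.tsum_mul_left]; rfl
      _ ≤ ENNReal.ofReal K * coverSum f ψ ε α Γ := by
          refine mul_le_mul_right ?_ _
          exact ENNReal.tsum_mono_subtype
            (fun p : X × ℕ => ENNReal.ofReal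
              (Real.exp (-α * (p.2 : ℝ) + ballSup f ψ ε p.2 p.1)))
            (Set.sep_subset _ _)
      _ ≤ ENNReal.ofReal K * η := mul_le_mul_right hlt.le _
  have hKne : ENNReal.ofReal K ≠ 0 := by
    simp only [ne_eq, ENNReal.ofReal_eq_zero, not_le]; exact hK
  have hKfin : ENNReal.ofReal K ≠ ∞ := ENNReal.ofReal_ne_top
  have hZ0 : (ν : Measure X) Z = 0 := by
    refine le_antisymm ?_ zero_le
    refine ENNReal.le_of_forall_pos_le_add fun δ hδ _ => ?_
    rw [zero_add]
    have hδne : ((δ : ℝ≥0∞)) ≠ 0 := by exact_mod_cast hδ.ne'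
    have hδ' : (0:ℝ≥0∞) < (δ:ℝ≥0∞) / ENNReal.ofReal K := ENNReal.div_pos hδne hKfin
    calc (ν : Measure X) Z ≤ ENNReal.ofReal K * ((δ:ℝ≥0∞) / ENNReal.ofReal K) := key _ hδ'
      _ = (δ:ℝ≥0∞) := ENNReal.mul_div_cancel hKne hKfin
  exact absurd hZ0 hνZ.ne'
end
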